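/- arXiv:2407.18785 — 12 statements merged into one kernel-verified Lean document; each statement's English description precedes it below -/
import Mathlib

section
/- If S is an integer and x = [x_1,...,x_m] is a nonempty multiset of integers of cardinality m ≥ 1 such that x_1 + ... + x_m ≤ S, then D(m,S) is weakly supermajorized by x; that is, for every k with 1 ≤ k ≤ m, the sum of the k smallest elements of D(m,S) is at least the sum of the k smallest elements of x. -/
/-- The sum of the `k` smallest elements of a multiset of integers. -/
def sumKSmallest (x : Multiset ℤ) (k : ℕ) : ℤ :=
  ((x.sort (· ≤ ·)).take k).sum

lemma sorted_getElem_le (l : List ℤ) (h : l.Pairwise (· ≤ ·)) {i j : ℕ} (hij : i ≤ j)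
    (hj : j < l.length) : l[i]'(lt_of_le_of_lt hij hj) ≤ l[j] := by
  rcases eq_or_lt_of_le hij with rfl | hlt
  · rfl
  · exact h.rel_get_of_lt (show (⟨i, _⟩ : Fin l.length) < ⟨j, hj⟩ from hlt)

/-- If `x` is a multiset of `m ≥ 1` integers whose sum is at most `S`, then `D(m,S)`
(the unique multiset of `m` integers summing to `S` with spread at most one) is weakly
supermajorized by `x`: for every `1 ≤ k ≤ m`, the sum of the `k` smallest elements of
`D(m,S)` is at least the sum of the `k` smallest elements of `x`. -/
theorem stmt_2 (m : ℕ) (hm : 1 ≤ m) (S : ℤ) (x : Multiset ℤ)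
    (hx : x.card = m) (hsum : x.sum ≤ S)
    (D : Multiset ℤ) (hDcard : D.card = m) (hDsum : D.sum = S)
    (hDspread : ∀ a ∈ D, ∀ b ∈ D, a ≤ b + 1) :
    ∀ k : ℕ, 1 ≤ k → k ≤ m → sumKSmallest x k ≤ sumKSmallest D k := by
  intro k hk1 hkm
  by_contra hcon
  push_neg at hcon
  set Lx := x.sort (· ≤ ·) with hLx
  set LD := D.sort (· ≤ ·) with hLD
  have hLxs : Lx.Pairwise (· ≤ ·) := x.pairwise_sort _
  have hLDs : LD.Pairwise (· ≤ ·) := D.pairwise_sort _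
  have hLxlen : Lx.length = m := by rw [hLx, Multiset.length_sort, hx]
  have hLDlen : LD.length = m := by rw [hLD, Multiset.length_sort, hDcard]
  have hLxsum : Lx.sum = x.sum := by rw [hLx, ← Multiset.sum_coe, Multiset.sort_eq]
  have hLDsum : LD.sum = S := by rw [hLD, ← hDsum, ← Multiset.sum_coe, Multiset.sort_eq]
  have hk1' : k - 1 < Lx.length := by omega
  have hkLx : k ≤ Lx.length := by omega
  have hkLD : k ≤ LD.length := by omega
  have h0LD : 0 < LD.length := by omega
  -- a := min of D
  set a := LD[0] with ha
  have haD : a ∈ D := by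
    rw [← Multiset.mem_sort (· ≤ ·)]; exact List.getElem_mem h0LD
  have hle_a1 : ∀ b ∈ D, b ≤ a + 1 := fun b hb => hDspread b hb a haD
  have ha_le : ∀ b ∈ LD, a ≤ b := by
    intro b hb
    obtain ⟨i, hi, rfl⟩ := List.mem_iff_getElem.mp hb
    exact sorted_getElem_le LD hLDs (Nat.zero_le i) hi
  -- t := k-th smallest of x
  set t := Lx[k-1] with ht
  have hxtake : (Lx.take k).sum ≤ (k : ℤ) * t := by
    have hlen : (Lx.take k).length = k := List.length_take_of_le hkLx
    have := List.sum_le_card_nsmul (Lx.take k) t ?_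
    · simpa [hlen, nsmul_eq_mul] using this
    · intro y hy
      obtain ⟨i, hi, rfl⟩ := List.mem_iff_getElem.mp hy
      rw [hlen] at hi
      rw [List.getElem_take]
      exact sorted_getElem_le Lx hLxs (by omega) hk1'
  have hxdrop : ∀ y ∈ Lx.drop k, t ≤ y := by
    intro y hy
    obtain ⟨i, hi, rfl⟩ := List.mem_iff_getElem.mp hy
    rw [List.length_drop] at hi
    rw [List.getElem_drop]
    exact sorted_getElem_le Lx hLxs (by omega) (by omega)
  have hxdropsum : ((m : ℤ) - k) * t ≤ (Lx.drop k).sum := by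
    have := List.card_nsmul_le_sum (Lx.drop k) t hxdrop
    have hlen : (Lx.drop k).length = m - k := by rw [List.length_drop, hLxlen]
    rw [hlen, nsmul_eq_mul] at this
    have : ((m - k : ℕ) : ℤ) * t ≤ (Lx.drop k).sum := this
    rwa [Nat.cast_sub hkm] at this
  -- D side
  have hDtake : (k : ℤ) * a ≤ (LD.take k).sum := by
    have := List.card_nsmul_le_sum (LD.take k) a ?_
    · rw [List.length_take_of_le hkLD, nsmul_eq_mul] at this; exact this
    · intro y hy; exact ha_le y (List.mem_of_mem_take hy)
  have hDdrop : (LD.drop k).sum ≤ ((m : ℤ) - k) * (a + 1) := by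
    have := List.sum_le_card_nsmul (LD.drop k) (a + 1) ?_
    · have hlen : (LD.drop k).length = m - k := by rw [List.length_drop, hLDlen]
      rw [hlen, nsmul_eq_mul] at this
      rwa [Nat.cast_sub hkm] at this
    · intro y hy
      refine hle_a1 y ?_
      rw [← Multiset.mem_sort (· ≤ ·)]
      exact List.mem_of_mem_drop hy
  have hDsplit : (LD.take k).sum + (LD.drop k).sum = S := by
    rw [← List.sum_take_add_sum_drop LD k] at hLDsum; exact hLDsum
  have hxsplit : (Lx.take k).sum + (Lx.drop k).sum = x.sum := by
    rw [← List.sum_take_add_sum_drop Lx k] at hLxsum; exact hLxsum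
  -- arithmetic
  have hs : (LD.take k).sum + 1 ≤ (Lx.take k).sum := by
    have : sumKSmallest D k < sumKSmallest x k := hcon
    unfold sumKSmallest at this
    rw [← hLx, ← hLD] at this
    omega
  have hta : a + 1 ≤ t := by
    have h1 : (k : ℤ) * a + 1 ≤ (k : ℤ) * t := by
      calc (k : ℤ) * a + 1 ≤ (LD.take k).sum + 1 := by linarith
        _ ≤ (Lx.take k).sum := hs
        _ ≤ (k : ℤ) * t := hxtake
    have hk0 : (0 : ℤ) < k := by exact_mod_cast hk1
    nlinarith
  have hmk : (0 : ℤ) ≤ (m : ℤ) - k := by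
    have : (k : ℤ) ≤ m := by exact_mod_cast hkm
    linarith
  have : S + 1 ≤ x.sum := by
    calc S + 1 = (LD.take k).sum + (LD.drop k).sum + 1 := by rw [hDsplit]
      _ ≤ (LD.take k).sum + 1 + ((m : ℤ) - k) * (a + 1) := by linarith
      _ ≤ (Lx.take k).sum + ((m : ℤ) - k) * t := by
          have := mul_le_mul_of_nonneg_left hta hmk
          linarith
      _ ≤ (Lx.take k).sum + (Lx.drop k).sum := by linarith
      _ = x.sum := hxsplit
  linarith
end

section
/- Let I ⊆ ℝ be an interval and g : I → ℝ be strictly decreasing and strictly convex on I. Define φ(x) = Σ_{i=1}^n g(x_i) for x ∈ I^n. Then for all x, y ∈ I^n, if x is weakly supermajorized by y and x is not a permutation of y, then φ(x) < φ(y). -/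
/-- The sum of the `k` smallest components of `x : Fin n → ℝ` (the first `k` entries of the
monotone rearrangement of `x`). -/
noncomputable def sumSmallest {n : ℕ} (x : Fin n → ℝ) (k : ℕ) : ℝ :=
  ∑ i ∈ Finset.univ.filter (fun i : Fin n => (i : ℕ) < k), x (Tuple.sort x i)

/-- `x` is weakly supermajorized by `y`: for each `k = 1,...,n` the sum of the `k` smallest
components of `x` is at least that of `y`. -/
def WeaklySupermajorizedBy {n : ℕ} (x y : Fin n → ℝ) : Prop :=
  ∀ k : ℕ, 1 ≤ k → k ≤ n → sumSmallest y k ≤ sumSmallest x k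

open Finset in
lemma slope_comm' (f : ℝ → ℝ) (p q : ℝ) (h : p ≠ q) :
    (f p - f q) / (p - q) = (f q - f p) / (q - p) := by
  have h1 : p - q ≠ 0 := sub_ne_zero.mpr h
  have h2 : q - p ≠ 0 := sub_ne_zero.mpr h.symm
  field_simp; ring

lemma abel_nonpos : ∀ (n : ℕ) (c d : ℕ → ℝ), (∀ i j, i ≤ j → c i ≤ c j) → (∀ i, c i ≤ 0) →
    (∀ k, k ≤ n → 0 ≤ ∑ i ∈ Finset.range k, d i) → ∑ i ∈ Finset.range n, c i * d i ≤ 0 := by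
  intro n
  induction n with
  | zero => intro c d _ _ _; simp
  | succ n ih =>
    intro c d hmono hneg hS
    have key : ∑ i ∈ Finset.range (n+1), c i * d i
        = (∑ i ∈ Finset.range n, (c (min i n) - c n) * d i)
          + c n * ∑ i ∈ Finset.range (n+1), d i := by
      calc ∑ i ∈ Finset.range (n+1), c i * d i
          = ∑ i ∈ Finset.range (n+1), ((c i - c n) * d i + c n * d i) := by
            apply Finset.sum_congr rfl; intros; ring
        _ = (∑ i ∈ Finset.range (n+1), (c i - c n) * d i)
            + c n * ∑ i ∈ Finset.range (n+1), d i := by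
            rw [Finset.sum_add_distrib, Finset.mul_sum]
        _ = (∑ i ∈ Finset.range n, (c (min i n) - c n) * d i)
            + c n * ∑ i ∈ Finset.range (n+1), d i := by
            congr 1
            rw [Finset.sum_range_succ]
            simp only [sub_self, zero_mul, add_zero]
            apply Finset.sum_congr rfl
            intro i hi
            rw [Finset.mem_range] at hi
            rw [min_eq_left hi.le]
    rw [key]
    have h1 : ∑ i ∈ Finset.range n, (c (min i n) - c n) * d i ≤ 0 := by
      apply ih (fun i => c (min i n) - c n) d
      · intro i j hij
        have : min i n ≤ min j n := min_le_min hij le_rfl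
        simpa using hmono _ _ this
      · intro i
        have := hmono _ _ (min_le_right i n)
        show c (min i n) - c n ≤ 0; linarith
      · intro k hk; exact hS k (hk.trans (Nat.le_succ n))
    have h2 : c n * ∑ i ∈ Finset.range (n+1), d i ≤ 0 :=
      mul_nonpos_of_nonpos_of_nonneg (hneg n) (hS (n+1) le_rfl)
    linarith

lemma core_maj (I : Set ℝ) (hI : I.OrdConnected) (g : ℝ → ℝ)
    (hdec : StrictAntiOn g I) (hconv : StrictConvexOn ℝ I g)
    (n : ℕ) (a b : ℕ → ℝ)
    (ha : ∀ i, i < n → a i ∈ I) (hb : ∀ i, i < n → b i ∈ I)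
    (hamono : ∀ i j, i ≤ j → j < n → a i ≤ a j)
    (hbmono : ∀ i j, i ≤ j → j < n → b i ≤ b j)
    (hS : ∀ k, k ≤ n → ∑ i ∈ Finset.range k, b i ≤ ∑ i ∈ Finset.range k, a i)
    (hne : ∃ i, i < n ∧ a i ≠ b i) :
    ∑ i ∈ Finset.range n, g (a i) < ∑ i ∈ Finset.range n, g (b i) := by
  classical
  set u : ℕ → ℝ := fun i => (a i + min (a i) (b i)) / 2 with hu
  set v : ℕ → ℝ := fun i => (a i + max (a i) (b i)) / 2 with hv
  have humem : ∀ i, i < n → u i ∈ I := by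
    intro i hi
    have hminI : min (a i) (b i) ∈ I := by
      rcases min_cases (a i) (b i) with ⟨h, _⟩ | ⟨h, _⟩ <;> rw [h]
      exacts [ha i hi, hb i hi]
    apply hI.out hminI (ha i hi)
    have := min_le_left (a i) (b i)
    constructor
    · show min (a i) (b i) ≤ (a i + min (a i) (b i)) / 2; linarith
    · show (a i + min (a i) (b i)) / 2 ≤ a i; linarith
  have hvmem : ∀ i, i < n → v i ∈ I := by
    intro i hi
    have hmaxI : max (a i) (b i) ∈ I := by
      rcases max_cases (a i) (b i) with ⟨h, _⟩ | ⟨h, _⟩ <;> rw [h]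
      exacts [ha i hi, hb i hi]
    apply hI.out (ha i hi) hmaxI
    have := le_max_left (a i) (b i)
    constructor
    · show a i ≤ (a i + max (a i) (b i)) / 2; linarith
    · show (a i + max (a i) (b i)) / 2 ≤ max (a i) (b i); linarith
  have huv_lt : ∀ i, a i ≠ b i → u i < v i := by
    intro i hne
    have := min_lt_max.mpr hne
    show (a i + min (a i) (b i)) / 2 < (a i + max (a i) (b i)) / 2
    linarith
  set c : ℕ → ℝ := fun i => (g (v i) - g (u i)) / (v i - u i) with hc
  have humono : ∀ i j, i ≤ j → j < n → u i ≤ u j := by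
    intro i j hij hj
    have h1 := hamono i j hij hj
    have h2 : min (a i) (b i) ≤ min (a j) (b j) :=
      min_le_min h1 (hbmono i j hij hj)
    show (a i + min (a i) (b i)) / 2 ≤ (a j + min (a j) (b j)) / 2; linarith
  have hvmono : ∀ i j, i ≤ j → j < n → v i ≤ v j := by
    intro i j hij hj
    have h1 := hamono i j hij hj
    have h2 : max (a i) (b i) ≤ max (a j) (b j) :=
      max_le_max h1 (hbmono i j hij hj)
    show (a i + max (a i) (b i)) / 2 ≤ (a j + max (a j) (b j)) / 2; linarith
  have F1 : ∀ i, i < n → a i ≠ b i → c i < 0 := by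
    intro i hi hab
    have hlt := huv_lt i hab
    have := hdec (humem i hi) (hvmem i hi) hlt
    exact div_neg_of_neg_of_pos (by linarith) (by linarith)
  have F2 : ∀ i j, i ≤ j → j < n → a i ≠ b i → a j ≠ b j → c i ≤ c j := by
    intro i j hij hj habi habj
    have hi : i < n := lt_of_le_of_lt hij hj
    have hui := humem i hi; have hvi := hvmem i hi
    have huj := humem j hj; have hvj := hvmem j hj
    have hltii := huv_lt i habi
    have hltjj := huv_lt j habj
    have huu := humono i j hij hj
    have hvv := hvmono i j hij hj
    have h1 : (g (v i) - g (u i)) / (v i - u i) ≤ (g (v j) - g (u i)) / (v j - u i) :=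
      hconv.convexOn.secant_mono hui hvi hvj (ne_of_gt hltii)
        (ne_of_gt (lt_of_lt_of_le hltii hvv)) hvv
    have h2 : (g (u i) - g (v j)) / (u i - v j) ≤ (g (u j) - g (v j)) / (u j - v j) :=
      hconv.convexOn.secant_mono hvj hui huj
        (ne_of_lt (lt_of_lt_of_le hltii hvv)) (ne_of_lt hltjj) huu
    rw [slope_comm' g (u i) (v j) (ne_of_lt (lt_of_lt_of_le hltii hvv)),
        slope_comm' g (u j) (v j) (ne_of_lt hltjj)] at h2
    exact le_trans h1 h2
  have F3 : ∀ i, i < n → a i ≠ b i → c i * (b i - a i) < g (b i) - g (a i) := by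
    intro i hi hab
    rcases lt_or_gt_of_ne hab with hlt | hgt
    · -- a i < b i
      have hui : u i = a i := by
        show (a i + min (a i) (b i)) / 2 = a i
        rw [min_eq_left hlt.le]; ring
      have hvival : v i = (a i + b i) / 2 := by
        show (a i + max (a i) (b i)) / 2 = (a i + b i) / 2
        rw [max_eq_right hlt.le]
      have h1 : a i < v i := by rw [hvival]; linarith
      have h2 : v i < b i := by rw [hvival]; linarith
      have hsec : (g (v i) - g (a i)) / (v i - a i) < (g (b i) - g (a i)) / (b i - a i) :=
        hconv.secant_strict_mono (ha i hi) (hvmem i hi) (hb i hi)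
          (ne_of_gt h1) (ne_of_gt (lt_trans h1 h2)) h2
      have hci : c i = (g (v i) - g (a i)) / (v i - a i) := by
        show (g (v i) - g (u i)) / (v i - u i) = (g (v i) - g (a i)) / (v i - a i)
        rw [hui]
      rw [hci]
      have hpos : (0:ℝ) < b i - a i := by linarith
      have hlt2 := mul_lt_mul_of_pos_right hsec hpos
      rwa [div_mul_cancel₀ _ (ne_of_gt hpos)] at hlt2
    · -- b i < a i
      have hvi : v i = a i := by
        show (a i + max (a i) (b i)) / 2 = a i
        rw [max_eq_left hgt.le]; ring
      have huival : u i = (a i + b i) / 2 := by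
        show (a i + min (a i) (b i)) / 2 = (a i + b i) / 2
        rw [min_eq_right hgt.le]
      have h1 : b i < u i := by rw [huival]; linarith
      have h2 : u i < a i := by rw [huival]; linarith
      have hsec : (g (b i) - g (a i)) / (b i - a i) < (g (u i) - g (a i)) / (u i - a i) :=
        hconv.secant_strict_mono (ha i hi) (hb i hi) (humem i hi)
          (ne_of_lt (lt_trans h1 h2)) (ne_of_lt h2) h1
      have hci : c i = (g (u i) - g (a i)) / (u i - a i) := by
        show (g (v i) - g (u i)) / (v i - u i) = (g (u i) - g (a i)) / (u i - a i)
        rw [hvi]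
        exact slope_comm' g (a i) (u i) (ne_of_gt h2)
      rw [hci]
      have hneg : b i - a i < 0 := by linarith
      have hlt2 := mul_lt_mul_of_neg_right hsec hneg
      rwa [div_mul_cancel₀ _ (ne_of_lt hneg)] at hlt2
  -- the monotone nonpositive extension c'
  set J : Finset ℕ := (Finset.range n).filter (fun i => a i ≠ b i) with hJ
  have hJmem : ∀ j, j ∈ J → j < n ∧ a j ≠ b j := by
    intro j hj
    rw [hJ, Finset.mem_filter, Finset.mem_range] at hj
    exact hj
  obtain ⟨i0, hi0n, hi0ne⟩ := hne
  have hJne : J.Nonempty :=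
    ⟨i0, by rw [hJ, Finset.mem_filter, Finset.mem_range]; exact ⟨hi0n, hi0ne⟩⟩
  set j0 : ℕ := J.min' hJne with hj0
  have hj0J : j0 ∈ J := J.min'_mem hJne
  set K : ℕ → Finset ℕ := fun i => insert j0 (J.filter (fun j => j ≤ i)) with hK
  have hKne : ∀ i, ((K i).image c).Nonempty :=
    fun i => ⟨c j0, Finset.mem_image_of_mem c (Finset.mem_insert_self _ _)⟩
  set c' : ℕ → ℝ := fun i => ((K i).image c).max' (hKne i) with hc'
  have hKJ : ∀ i j, j ∈ K i → j ∈ J := by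
    intro i j hj
    rcases Finset.mem_insert.mp hj with h | h
    · rw [h]; exact hj0J
    · exact (Finset.mem_filter.mp h).1
  have c'neg : ∀ i, c' i ≤ 0 := by
    intro i
    apply Finset.max'_le
    intro z hz
    obtain ⟨j, hjK, rfl⟩ := Finset.mem_image.mp hz
    obtain ⟨hjn, hjne⟩ := hJmem j (hKJ i j hjK)
    exact (F1 j hjn hjne).le
  have c'mono : ∀ i j, i ≤ j → c' i ≤ c' j := by
    intro i j hij
    apply Finset.max'_le
    intro z hz
    apply Finset.le_max'
    obtain ⟨j', hj'K, rfl⟩ := Finset.mem_image.mp hz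
    apply Finset.mem_image_of_mem
    rcases Finset.mem_insert.mp hj'K with h | h
    · rw [h]; exact Finset.mem_insert_self _ _
    · obtain ⟨hj'J, hj'le⟩ := Finset.mem_filter.mp h
      exact Finset.mem_insert_of_mem
        (Finset.mem_filter.mpr ⟨hj'J, le_trans hj'le hij⟩)
  have c'eq : ∀ j, j ∈ J → c' j = c j := by
    intro j hjJ
    obtain ⟨hjn, hjne⟩ := hJmem j hjJ
    apply le_antisymm
    · apply Finset.max'_le
      intro z hz
      obtain ⟨j', hj'K, rfl⟩ := Finset.mem_image.mp hz
      have hj'J : j' ∈ J := hKJ j j' hj'K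
      obtain ⟨hj'n, hj'ne⟩ := hJmem j' hj'J
      have hle : j' ≤ j := by
        rcases Finset.mem_insert.mp hj'K with h | h
        · rw [h]; exact J.min'_le j hjJ
        · exact (Finset.mem_filter.mp h).2
      exact F2 j' j hle hjn hj'ne hjne
    · apply Finset.le_max'
      apply Finset.mem_image_of_mem
      exact Finset.mem_insert_of_mem (Finset.mem_filter.mpr ⟨hjJ, le_rfl⟩)
  -- main comparison
  have main1 : ∑ i ∈ Finset.range n, c' i * (b i - a i)
      < ∑ i ∈ Finset.range n, (g (b i) - g (a i)) := by
    apply Finset.sum_lt_sum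
    · intro i hi
      rw [Finset.mem_range] at hi
      by_cases h : a i = b i
      · simp [h]
      · rw [c'eq i (by rw [hJ, Finset.mem_filter, Finset.mem_range]; exact ⟨hi, h⟩)]
        exact (F3 i hi h).le
    · refine ⟨i0, Finset.mem_range.mpr hi0n, ?_⟩
      rw [c'eq i0 (by rw [hJ, Finset.mem_filter, Finset.mem_range]; exact ⟨hi0n, hi0ne⟩)]
      exact F3 i0 hi0n hi0ne
  have main2 : ∑ i ∈ Finset.range n, c' i * (a i - b i) ≤ 0 := by
    apply abel_nonpos n c' (fun i => a i - b i) c'mono c'neg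
    intro k hk
    have := hS k hk
    rw [Finset.sum_sub_distrib]
    linarith
  have main3 : ∑ i ∈ Finset.range n, c' i * (b i - a i)
      = - ∑ i ∈ Finset.range n, c' i * (a i - b i) := by
    rw [← Finset.sum_neg_distrib]
    apply Finset.sum_congr rfl
    intros; ring
  rw [Finset.sum_sub_distrib] at main1
  rw [main3] at main1
  linarith

/-- The natural-indexed sorted rearrangement, padded with `0`. -/
noncomputable def sortedNat {n : ℕ} (x : Fin n → ℝ) : ℕ → ℝ :=
  fun i => if h : i < n then x (Tuple.sort x ⟨i, h⟩) else 0

lemma sortedNat_apply {n : ℕ} (x : Fin n → ℝ) (i : Fin n) :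
    sortedNat x (i : ℕ) = x (Tuple.sort x i) := by
  rw [sortedNat, dif_pos i.isLt]

lemma sortedNat_mono {n : ℕ} (x : Fin n → ℝ) {i j : ℕ} (hij : i ≤ j) (hj : j < n) :
    sortedNat x i ≤ sortedNat x j := by
  have hi : i < n := lt_of_le_of_lt hij hj
  simp only [sortedNat]
  rw [dif_pos hi, dif_pos hj]
  exact Tuple.monotone_sort x (show (⟨i, hi⟩ : Fin n) ≤ ⟨j, hj⟩ from hij)

lemma sumSmallest_eq' {n : ℕ} (x : Fin n → ℝ) (k : ℕ) (hk : k ≤ n) :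
    sumSmallest x k = ∑ i ∈ Finset.range k, sortedNat x i := by
  have h1 : sumSmallest x k
      = ∑ i : Fin n, if (i : ℕ) < k then sortedNat x (i : ℕ) else 0 := by
    rw [sumSmallest, Finset.sum_filter]
    apply Finset.sum_congr rfl
    intro i _
    by_cases h : (i : ℕ) < k
    · rw [if_pos h, if_pos h, sortedNat_apply]
    · rw [if_neg h, if_neg h]
  rw [h1, Fin.sum_univ_eq_sum_range (fun i => if i < k then sortedNat x i else 0) n,
      ← Finset.sum_filter]
  congr 1
  ext i
  simp only [Finset.mem_filter, Finset.mem_range]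
  omega

/-- Let `I ⊆ ℝ` be an interval and `g` strictly decreasing and strictly convex on `I`.
If `x, y ∈ Iⁿ`, `x` is weakly supermajorized by `y`, and `x` is not a permutation of `y`,
then `∑ i, g (x i) < ∑ i, g (y i)`. -/
theorem stmt_3 {n : ℕ} (I : Set ℝ) (hI : I.OrdConnected) (g : ℝ → ℝ)
    (hdec : StrictAntiOn g I) (hconv : StrictConvexOn ℝ I g)
    (x y : Fin n → ℝ) (hx : ∀ i, x i ∈ I) (hy : ∀ i, y i ∈ I)
    (hmaj : WeaklySupermajorizedBy x y)
    (hperm : ¬ ∃ σ : Equiv.Perm (Fin n), x = y ∘ σ) :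
    ∑ i, g (x i) < ∑ i, g (y i) := by
  classical
  have hsumx : ∑ i, g (x i) = ∑ i ∈ Finset.range n, g (sortedNat x i) := by
    rw [← Equiv.sum_comp (Tuple.sort x) (fun i => g (x i)),
        ← Fin.sum_univ_eq_sum_range (fun i => g (sortedNat x i)) n]
    apply Finset.sum_congr rfl
    intro i _
    rw [sortedNat_apply]
  have hsumy : ∑ i, g (y i) = ∑ i ∈ Finset.range n, g (sortedNat y i) := by
    rw [← Equiv.sum_comp (Tuple.sort y) (fun i => g (y i)),
        ← Fin.sum_univ_eq_sum_range (fun i => g (sortedNat y i)) n]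
    apply Finset.sum_congr rfl
    intro i _
    rw [sortedNat_apply]
  rw [hsumx, hsumy]
  apply core_maj I hI g hdec hconv n (sortedNat x) (sortedNat y)
  · intro i hi; rw [sortedNat, dif_pos hi]; exact hx _
  · intro i hi; rw [sortedNat, dif_pos hi]; exact hy _
  · intro i j hij hj; exact sortedNat_mono x hij hj
  · intro i j hij hj; exact sortedNat_mono y hij hj
  · intro k hk
    rcases Nat.eq_zero_or_pos k with rfl | hk1
    · simp
    · rw [← sumSmallest_eq' x k hk, ← sumSmallest_eq' y k hk]
      exact hmaj k hk1 hk
  · by_contra h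
    push_neg at h
    apply hperm
    refine ⟨(Tuple.sort x).symm.trans (Tuple.sort y), ?_⟩
    have hsorted : ∀ i : Fin n, x (Tuple.sort x i) = y (Tuple.sort y i) := by
      intro i
      have := h (i : ℕ) i.isLt
      rwa [sortedNat_apply, sortedNat_apply] at this
    funext j
    have := hsorted ((Tuple.sort x).symm j)
    simp only [Equiv.apply_symm_apply] at this
    simpa [Function.comp, Equiv.trans_apply] using this
end

section
/- Let I ⊆ ℝ be an interval and g : I → ℝ be strictly increasing and strictly convex on I. Define φ(x) = Σ_{i=1}^n g(x_i). Then for all x, y ∈ I^n, if x is weakly submajorized by y and x is not a permutation of y, then φ(x) < φ(y). -/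
/-- The sum of the `k` largest components of `x : Fin n → ℝ` (the last `k` entries of the
monotone rearrangement of `x`). -/
noncomputable def sumLargest {n : ℕ} (x : Fin n → ℝ) (k : ℕ) : ℝ :=
  ∑ i ∈ Finset.univ.filter (fun i : Fin n => n - k ≤ (i : ℕ)), x (Tuple.sort x i)

/-- `x` is weakly submajorized by `y`: for each `k = 1,...,n` the sum of the `k` largest
components of `x` is at most that of `y`. -/
def WeaklySubmajorizedBy {n : ℕ} (x y : Fin n → ℝ) : Prop :=
  ∀ k : ℕ, 1 ≤ k → k ≤ n → sumLargest x k ≤ sumLargest y k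

private lemma my_slope_pos {I : Set ℝ} {g : ℝ → ℝ} (hinc : StrictMonoOn g I)
    {a b : ℝ} (ha : a ∈ I) (hb : b ∈ I) (hab : a ≠ b) :
    0 < (g b - g a) / (b - a) := by
  rcases lt_or_gt_of_ne hab with h | h
  · exact div_pos (by linarith [hinc ha hb h]) (by linarith)
  · rw [div_pos_iff]
    right
    exact ⟨by linarith [hinc hb ha h], by linarith⟩

private lemma my_slope_comm (g : ℝ → ℝ) (a b : ℝ) :
    (g b - g a) / (b - a) = (g a - g b) / (a - b) := by
  rw [← neg_div_neg_eq]
  ring_nf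

private lemma my_slope_lt {I : Set ℝ} {g : ℝ → ℝ} (hconv : StrictConvexOn ℝ I g)
    {a b a' b' : ℝ} (ha : a ∈ I) (hb : b ∈ I) (ha' : a' ∈ I) (hb' : b' ∈ I)
    (haa : a ≤ a') (hbb : b ≤ b') (hab : a ≠ b) (hab' : a' ≠ b')
    (hne : a ≠ a' ∨ b ≠ b') :
    (g b - g a) / (b - a) < (g b' - g a') / (b' - a') := by
  rcases haa.eq_or_lt with rfl | haa'
  · have hbb' : b < b' := by
      rcases hne with h | h
      · exact absurd rfl h
      · exact hbb.lt_of_ne h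
    exact hconv.secant_strict_mono ha hb hb' hab.symm hab'.symm hbb'
  · rcases hbb.eq_or_lt with rfl | hbb'
    · rw [my_slope_comm g a b, my_slope_comm g a' b]
      exact hconv.secant_strict_mono hb ha ha' hab hab' haa'
    · by_cases hba : b' = a
      · have h1 : a' ≠ b := by intro h; rw [← h] at hbb'; rw [hba] at hbb'; linarith
        calc (g b - g a) / (b - a) = (g a - g b) / (a - b) := my_slope_comm g a b
          _ ≤ (g a' - g b) / (a' - b) :=
              hconv.convexOn.secant_mono hb ha ha' hab h1 haa'.le
          _ = (g b - g a') / (b - a') := (my_slope_comm g a' b).symm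
          _ < (g b' - g a') / (b' - a') := by
              refine hconv.secant_strict_mono ha' hb hb' h1.symm ?_ hbb'
              rw [hba]; exact haa'.ne
      · calc (g b - g a) / (b - a) < (g b' - g a) / (b' - a) :=
              hconv.secant_strict_mono ha hb hb' hab.symm hba hbb'
          _ = (g a - g b') / (a - b') := my_slope_comm g a b'
          _ ≤ (g a' - g b') / (a' - b') := by
              refine hconv.convexOn.secant_mono hb' ha ha' ?_ hab' haa'.le
              exact fun h => hba h.symm
          _ = (g b' - g a') / (b' - a') := (my_slope_comm g a' b').symm

private lemma my_slope_le {I : Set ℝ} {g : ℝ → ℝ} (hconv : StrictConvexOn ℝ I g)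
    {a b a' b' : ℝ} (ha : a ∈ I) (hb : b ∈ I) (ha' : a' ∈ I) (hb' : b' ∈ I)
    (haa : a ≤ a') (hbb : b ≤ b') (hab : a ≠ b) (hab' : a' ≠ b') :
    (g b - g a) / (b - a) ≤ (g b' - g a') / (b' - a') := by
  by_cases h : a = a' ∧ b = b'
  · rw [h.1, h.2]
  · rw [not_and_or] at h
    exact (my_slope_lt hconv ha hb ha' hb' haa hbb hab hab' h).le

private lemma my_abel_nonneg (n : ℕ) : ∀ (m a : ℕ) (c d : ℕ → ℝ), a + m = n →
    (∀ i j, a ≤ i → i ≤ j → j < n → d i ≠ 0 → d j ≠ 0 → c i ≤ c j) →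
    (∀ i, a ≤ i → i < n → d i ≠ 0 → 0 ≤ c i) →
    (∀ k, a ≤ k → 0 ≤ ∑ i ∈ Finset.Ico k n, d i) →
    0 ≤ ∑ i ∈ Finset.Ico a n, c i * d i := by
  intro m
  induction m with
  | zero =>
    intro a c d ha _ _ _
    have : a = n := by omega
    simp [this]
  | succ m ih =>
    intro a c d ha hmono hpos htail
    have han : a < n := by omega
    rw [Finset.sum_eq_sum_Ico_succ_bot han]
    by_cases hd : d a = 0
    · rw [hd, mul_zero, zero_add]
      exact ih (a + 1) c d (by omega)
        (fun i j h1 h2 h3 h4 h5 => hmono i j (by omega) h2 h3 h4 h5)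
        (fun i h1 h2 h3 => hpos i (by omega) h2 h3)
        (fun k hk => htail k (by omega))
    · have h1 : 0 ≤ ∑ i ∈ Finset.Ico (a + 1) n, (c i - c a) * d i := by
        refine ih (a + 1) (fun i => c i - c a) d (by omega) ?_ ?_ ?_
        · intro i j hi hij hj hdi hdj
          have := hmono i j (by omega) hij hj hdi hdj
          simpa using this
        · intro i hi hin hdi
          simpa [sub_nonneg] using hmono a i le_rfl (by omega) hin hd hdi
        · exact fun k hk => htail k (by omega)
      have h2 : 0 ≤ c a * ∑ i ∈ Finset.Ico a n, d i :=
        mul_nonneg (hpos a le_rfl han hd) (htail a le_rfl)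
      have h3 : ∑ i ∈ Finset.Ico a n, d i = d a + ∑ i ∈ Finset.Ico (a + 1) n, d i :=
        Finset.sum_eq_sum_Ico_succ_bot han d
      have h2' : 0 ≤ c a * d a + c a * ∑ i ∈ Finset.Ico (a + 1) n, d i := by
        rw [h3, mul_add] at h2; exact h2
      have key : ∑ i ∈ Finset.Ico (a + 1) n, (c i - c a) * d i
          = (∑ i ∈ Finset.Ico (a + 1) n, c i * d i)
            - c a * ∑ i ∈ Finset.Ico (a + 1) n, d i := by
        rw [Finset.mul_sum, ← Finset.sum_sub_distrib]
        exact Finset.sum_congr rfl (fun i _ => by ring)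
      rw [key] at h1
      linarith

private lemma my_core (n : ℕ) (I : Set ℝ) (g : ℝ → ℝ)
    (hinc : StrictMonoOn g I) (hconv : StrictConvexOn ℝ I g)
    (U V : ℕ → ℝ) (hUI : ∀ i, i < n → U i ∈ I) (hVI : ∀ i, i < n → V i ∈ I)
    (hUm : ∀ i j, i ≤ j → j < n → U i ≤ U j) (hVm : ∀ i j, i ≤ j → j < n → V i ≤ V j)
    (htail : ∀ k, 0 ≤ ∑ i ∈ Finset.Ico k n, (V i - U i))
    (hne : ∃ i, i < n ∧ U i ≠ V i) :
    ∑ i ∈ Finset.Ico 0 n, g (U i) < ∑ i ∈ Finset.Ico 0 n, g (V i) := by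
  classical
  set c : ℕ → ℝ := fun i => (g (V i) - g (U i)) / (V i - U i) with hc
  set d : ℕ → ℝ := fun i => if i < n then V i - U i else 0 with hd
  -- the support set
  set S : Finset ℕ := (Finset.range n).filter (fun i => U i ≠ V i) with hSdef
  have hmemS : ∀ i, i ∈ S ↔ i < n ∧ U i ≠ V i := by
    intro i; simp [hSdef]
  have hdS : ∀ i, d i ≠ 0 ↔ i ∈ S := by
    intro i
    rw [hmemS]
    constructor
    · intro h
      by_cases hin : i < n
      · refine ⟨hin, ?_⟩
        intro he
        apply h
        simp [hd, hin, he]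
      · exact absurd (by simp [hd, hin]) h
    · rintro ⟨hin, hne'⟩
      simp only [hd, if_pos hin]
      exact sub_ne_zero.mpr (Ne.symm hne')
  have hS : S.Nonempty := by
    obtain ⟨i, hi, hne'⟩ := hne
    exact ⟨i, (hmemS i).mpr ⟨hi, hne'⟩⟩
  set j : ℕ := S.max' hS with hjdef
  have hjS : j ∈ S := S.max'_mem hS
  have hjn : j < n := ((hmemS j).mp hjS).1
  -- d vanishes off S
  have hd0 : ∀ i, i ∉ S → d i = 0 := by
    intro i hi
    by_contra h
    exact hi ((hdS i).mp h)
  -- d j > 0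
  have hdj : 0 < d j := by
    have h1 : ∑ i ∈ Finset.Ico j n, (V i - U i) = ∑ i ∈ Finset.Ico j n, d i := by
      refine Finset.sum_congr rfl (fun i hi => ?_)
      rw [Finset.mem_Ico] at hi
      simp [hd, hi.2]
    have h2 : ∑ i ∈ Finset.Ico (j + 1) n, d i = 0 := by
      refine Finset.sum_eq_zero (fun i hi => ?_)
      rw [Finset.mem_Ico] at hi
      refine hd0 i (fun hiS => ?_)
      have := S.le_max' i hiS
      omega
    have h3 := htail j
    rw [h1, Finset.sum_eq_sum_Ico_succ_bot hjn, h2, add_zero] at h3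
    refine h3.lt_of_ne (fun h => ?_)
    have := (hdS j).mpr hjS
    exact this h.symm
  -- c positive on S
  have hcpos : ∀ i ∈ S, 0 < c i := by
    intro i hiS
    obtain ⟨hin, hne'⟩ := (hmemS i).mp hiS
    exact my_slope_pos hinc (hUI i hin) (hVI i hin) hne'
  -- c monotone on S
  have hcmono : ∀ i i', i ∈ S → i' ∈ S → i ≤ i' → c i ≤ c i' := by
    intro i i' hiS hiS' hii
    obtain ⟨hin, hne1⟩ := (hmemS i).mp hiS
    obtain ⟨hin', hne2⟩ := (hmemS i').mp hiS'
    exact my_slope_le hconv (hUI i hin) (hVI i hin) (hUI i' hin') (hVI i' hin')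
      (hUm i i' hii hin') (hVm i i' hii hin') hne1 hne2
  -- the set of indices whose pair matches the top pair
  set A : Finset ℕ := S.filter (fun i => U i = U j ∧ V i = V j) with hAdef
  have hjA : j ∈ A := by
    rw [hAdef, Finset.mem_filter]
    exact ⟨hjS, rfl, rfl⟩
  set js : ℕ := A.min' ⟨j, hjA⟩ with hjsdef
  have hjsA : js ∈ A := A.min'_mem _
  have hjsS : js ∈ S := (Finset.mem_filter.mp hjsA).1
  have hjsj : js ≤ j := Finset.min'_le A j hjA
  have hjspair : U js = U j ∧ V js = V j := (Finset.mem_filter.mp hjsA).2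
  -- every i ∈ S with js ≤ i has the top pair
  have key1 : ∀ i ∈ S, js ≤ i → U i = U j ∧ V i = V j := by
    intro i hiS hjsi
    obtain ⟨hin, _⟩ := (hmemS i).mp hiS
    have hij : i ≤ j := S.le_max' i hiS
    constructor
    · exact le_antisymm (hUm i j hij hjn) (hjspair.1 ▸ hUm js i hjsi hin)
    · exact le_antisymm (hVm i j hij hjn) (hjspair.2 ▸ hVm js i hjsi hin)
  -- every i ∈ S with i < js has strictly smaller slope
  have key2 : ∀ i ∈ S, i < js → c i < c j := by
    intro i hiS hijs
    obtain ⟨hin, hne1⟩ := (hmemS i).mp hiS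
    obtain ⟨_, hne2⟩ := (hmemS j).mp hjS
    have hij : i ≤ j := S.le_max' i hiS
    have hpairne : U i ≠ U j ∨ V i ≠ V j := by
      by_contra h
      push_neg at h
      have : i ∈ A := by
        rw [hAdef, Finset.mem_filter]
        exact ⟨hiS, h.1, h.2⟩
      have := Finset.min'_le A i this
      omega
    exact my_slope_lt hconv (hUI i hin) (hVI i hin) (hUI j hjn) (hVI j hjn)
      (hUm i j hij hjn) (hVm i j hij hjn) hne1 hne2 hpairne
  -- pointwise identity
  have hpt : ∀ i, i < n → g (V i) - g (U i) = c i * d i := by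
    intro i hin
    by_cases h : U i = V i
    · simp [hc, hd, h]
    · rw [hc, hd]
      simp only [if_pos hin]
      rw [div_mul_cancel₀]
      exact sub_ne_zero.mpr (Ne.symm h)
  -- reduce goal
  rw [← sub_pos, ← Finset.sum_sub_distrib]
  have hgoal : ∑ i ∈ Finset.Ico 0 n, (g (V i) - g (U i))
      = ∑ i ∈ Finset.Ico 0 n, c i * d i := by
    refine Finset.sum_congr rfl (fun i hi => ?_)
    rw [Finset.mem_Ico] at hi
    exact hpt i hi.2
  rw [hgoal]
  have hsub : S ⊆ Finset.Ico 0 n := by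
    intro i hi
    rw [Finset.mem_Ico]
    exact ⟨Nat.zero_le _, ((hmemS i).mp hi).1⟩
  have hrestrict : ∀ (f : ℕ → ℝ), ∑ i ∈ Finset.Ico 0 n, f i * d i = ∑ i ∈ S, f i * d i := by
    intro f
    refine (Finset.sum_subset hsub (fun i _ hiS => ?_)).symm
    rw [hd0 i hiS, mul_zero]
  rw [hrestrict c]
  -- split S into B (i < js) and A' (js ≤ i)
  have hsplit : ∑ i ∈ S, c i * d i
      = ∑ i ∈ S.filter (fun i => i < js), c i * d i
        + ∑ i ∈ S.filter (fun i => ¬ i < js), c i * d i :=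
    (Finset.sum_filter_add_sum_filter_not S _ _).symm
  set B : Finset ℕ := S.filter (fun i => i < js) with hBdef
  set A' : Finset ℕ := S.filter (fun i => ¬ i < js) with hA'def
  have hjA' : j ∈ A' := by
    rw [hA'def, Finset.mem_filter]
    exact ⟨hjS, by omega⟩
  have hA'card : 0 < A'.card := Finset.card_pos.mpr ⟨j, hjA'⟩
  have hA'term : ∀ i ∈ A', c i = c j ∧ d i = d j := by
    intro i hi
    rw [hA'def, Finset.mem_filter] at hi
    obtain ⟨hiS, hge⟩ := hi
    obtain ⟨hin, _⟩ := (hmemS i).mp hiS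
    obtain ⟨h1, h2⟩ := key1 i hiS (by omega)
    constructor
    · rw [hc]; simp only [h1, h2]
    · simp [hd, hin, hjn, h1, h2]
  have hcj : 0 < c j := hcpos j hjS
  by_cases hB : B.Nonempty
  · -- nonempty case: use Abel with modified coefficient
    set b : ℕ := B.max' hB with hbdef
    have hbB : b ∈ B := B.max'_mem hB
    have hbS : b ∈ S := (Finset.mem_filter.mp hbB).1
    have hbjs : b < js := (Finset.mem_filter.mp hbB).2
    have hcb : c b < c j := key2 b hbS hbjs
    have hcbpos : 0 < c b := hcpos b hbS
    set C : ℕ → ℝ := fun i => if i < js then c i else c b with hC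
    have habel : 0 ≤ ∑ i ∈ Finset.Ico 0 n, C i * d i := by
      refine my_abel_nonneg n n 0 C d (by omega) ?_ ?_ ?_
      · intro i i' _ hii' hi'n hdi hdi'
        have hiS : i ∈ S := (hdS i).mp hdi
        have hiS' : i' ∈ S := (hdS i').mp hdi'
        rw [hC]
        by_cases h1 : i < js
        · by_cases h2 : i' < js
          · simp only [if_pos h1, if_pos h2]
            exact hcmono i i' hiS hiS' hii'
          · simp only [if_pos h1, if_neg h2]
            have hiB : i ∈ B := by rw [hBdef, Finset.mem_filter]; exact ⟨hiS, h1⟩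
            exact hcmono i b hiS hbS (B.le_max' i hiB)
        · have h2 : ¬ i' < js := by omega
          simp [if_neg h1, if_neg h2]
      · intro i _ hin hdi
        have hiS : i ∈ S := (hdS i).mp hdi
        rw [hC]
        by_cases h1 : i < js
        · simp only [if_pos h1]
          exact (hcpos i hiS).le
        · simp only [if_neg h1]
          exact hcbpos.le
      · intro k _
        have : ∑ i ∈ Finset.Ico k n, d i = ∑ i ∈ Finset.Ico k n, (V i - U i) := by
          refine Finset.sum_congr rfl (fun i hi => ?_)
          rw [Finset.mem_Ico] at hi
          simp [hd, hi.2]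
        rw [this]
        exact htail k
    rw [hrestrict C] at habel
    have hCsplit : ∑ i ∈ S, C i * d i
        = ∑ i ∈ B, c i * d i + ∑ i ∈ A', c b * d j := by
      rw [(Finset.sum_filter_add_sum_filter_not S (fun i => i < js)
        (fun i => C i * d i)).symm, ← hBdef, ← hA'def]
      congr 1
      · refine Finset.sum_congr rfl (fun i hi => ?_)
        have h1 : i < js := (Finset.mem_filter.mp hi).2
        rw [hC]; simp [if_pos h1]
      · refine Finset.sum_congr rfl (fun i hi => ?_)
        have h1 : ¬ i < js := (Finset.mem_filter.mp hi).2
        rw [hC]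
        simp only [if_neg h1]
        rw [(hA'term i hi).2]
    have hmainsplit : ∑ i ∈ S, c i * d i
        = ∑ i ∈ B, c i * d i + ∑ i ∈ A', c j * d j := by
      rw [hsplit]
      congr 1
      refine Finset.sum_congr rfl (fun i hi => ?_)
      rw [(hA'term i hi).1, (hA'term i hi).2]
    rw [hmainsplit]
    rw [hCsplit] at habel
    have hconst1 : ∑ i ∈ A', c j * d j = (A'.card : ℝ) * (c j * d j) := by
      rw [Finset.sum_const, nsmul_eq_mul]
    have hconst2 : ∑ i ∈ A', c b * d j = (A'.card : ℝ) * (c b * d j) := by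
      rw [Finset.sum_const, nsmul_eq_mul]
    rw [hconst1]
    rw [hconst2] at habel
    have hcard1 : (1 : ℝ) ≤ (A'.card : ℝ) := by exact_mod_cast hA'card
    nlinarith [mul_pos (sub_pos.mpr hcb) hdj]
  · -- B empty: all terms equal the top term
    rw [hsplit]
    rw [Finset.not_nonempty_iff_eq_empty] at hB
    rw [hB, Finset.sum_empty, zero_add]
    have : ∑ i ∈ A', c i * d i = (A'.card : ℝ) * (c j * d j) := by
      rw [Finset.sum_congr rfl (fun i hi => by rw [(hA'term i hi).1, (hA'term i hi).2]),
        Finset.sum_const, nsmul_eq_mul]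
    rw [this]
    have hcard1 : (1 : ℝ) ≤ (A'.card : ℝ) := by exact_mod_cast hA'card
    nlinarith [mul_pos hcj hdj]

private lemma my_sum_translate {n : ℕ} (k : ℕ) (w : Fin n → ℝ) (W : ℕ → ℝ)
    (hw : ∀ i : Fin n, W i = w i) :
    ∑ i ∈ Finset.univ.filter (fun i : Fin n => k ≤ (i : ℕ)), w i
      = ∑ i ∈ Finset.Ico k n, W i := by
  have h1 : Finset.Ico k n = (Finset.range n).filter (fun i => k ≤ i) := by
    ext a
    simp [Finset.mem_Ico, Finset.mem_filter, Finset.mem_range]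
    omega
  rw [h1, Finset.sum_filter, Finset.sum_filter]
  rw [← Fin.sum_univ_eq_sum_range (fun m => if k ≤ m then W m else 0) n]
  refine Finset.sum_congr rfl (fun i _ => ?_)
  by_cases h : k ≤ (i : ℕ) <;> simp [h, hw i]

/-- Let `I ⊆ ℝ` be an interval and `g` strictly increasing and strictly convex on `I`.
If `x, y ∈ Iⁿ`, `x` is weakly submajorized by `y`, and `x` is not a permutation of `y`,
then `∑ i, g (x i) < ∑ i, g (y i)`. -/
theorem stmt_4 {n : ℕ} (I : Set ℝ) (hI : I.OrdConnected) (g : ℝ → ℝ)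
    (hinc : StrictMonoOn g I) (hconv : StrictConvexOn ℝ I g)
    (x y : Fin n → ℝ) (hx : ∀ i, x i ∈ I) (hy : ∀ i, y i ∈ I)
    (hmaj : WeaklySubmajorizedBy x y)
    (hperm : ¬ ∃ σ : Equiv.Perm (Fin n), x = y ∘ σ) :
    ∑ i, g (x i) < ∑ i, g (y i) := by
  classical
  set σx := Tuple.sort x with hσx
  set σy := Tuple.sort y with hσy
  set u : Fin n → ℝ := x ∘ σx with hu
  set v : Fin n → ℝ := y ∘ σy with hv
  have hum : Monotone u := Tuple.monotone_sort x
  have hvm : Monotone v := Tuple.monotone_sort y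
  have huv : u ≠ v := by
    intro h
    apply hperm
    refine ⟨σx.symm.trans σy, ?_⟩
    funext i
    have h2 := congrFun h (σx.symm i)
    simp only [hu, hv, Function.comp_apply, Equiv.apply_symm_apply] at h2
    simpa using h2
  set U : ℕ → ℝ := fun i => if h : i < n then u ⟨i, h⟩ else 0 with hU
  set V : ℕ → ℝ := fun i => if h : i < n then v ⟨i, h⟩ else 0 with hV
  have hUval : ∀ i : Fin n, U i = u i := by
    intro i; simp [hU, i.isLt]
  have hVval : ∀ i : Fin n, V i = v i := by
    intro i; simp [hV, i.isLt]
  have hUI : ∀ i, i < n → U i ∈ I := by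
    intro i hi
    rw [hU]
    simp only [dif_pos hi]
    exact hx _
  have hVI : ∀ i, i < n → V i ∈ I := by
    intro i hi
    rw [hV]
    simp only [dif_pos hi]
    exact hy _
  have hUm : ∀ i j, i ≤ j → j < n → U i ≤ U j := by
    intro i j hij hj
    have hi : i < n := lt_of_le_of_lt hij hj
    rw [hU]
    simp only [dif_pos hi, dif_pos hj]
    exact hum (show (⟨i, hi⟩ : Fin n) ≤ ⟨j, hj⟩ from hij)
  have hVm : ∀ i j, i ≤ j → j < n → V i ≤ V j := by
    intro i j hij hj
    have hi : i < n := lt_of_le_of_lt hij hj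
    rw [hV]
    simp only [dif_pos hi, dif_pos hj]
    exact hvm (show (⟨i, hi⟩ : Fin n) ≤ ⟨j, hj⟩ from hij)
  have htail : ∀ k, 0 ≤ ∑ i ∈ Finset.Ico k n, (V i - U i) := by
    intro k
    rcases le_or_gt n k with h | h
    · rw [Finset.Ico_eq_empty (by omega), Finset.sum_empty]
    · have h1 := hmaj (n - k) (by omega) (by omega)
      have hx' : sumLargest x (n - k) = ∑ i ∈ Finset.Ico k n, U i := by
        rw [sumLargest, show n - (n - k) = k by omega]
        exact my_sum_translate k u U hUval
      have hy' : sumLargest y (n - k) = ∑ i ∈ Finset.Ico k n, V i := by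
        rw [sumLargest, show n - (n - k) = k by omega]
        exact my_sum_translate k v V hVval
      rw [hx', hy'] at h1
      rw [Finset.sum_sub_distrib]
      linarith
  have hne : ∃ i, i < n ∧ U i ≠ V i := by
    obtain ⟨i, hi⟩ := Function.ne_iff.mp huv
    exact ⟨i, i.isLt, by rw [hUval i, hVval i]; exact hi⟩
  have hcore := my_core n I g hinc hconv U V hUI hVI hUm hVm htail hne
  have hxsum : ∑ i, g (x i) = ∑ i ∈ Finset.Ico 0 n, g (U i) := by
    rw [← Equiv.sum_comp σx (fun i => g (x i))]
    rw [show Finset.Ico 0 n = Finset.range n from (Finset.range_eq_Ico n).symm]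
    rw [← Fin.sum_univ_eq_sum_range (fun m => g (U m)) n]
    refine Finset.sum_congr rfl (fun i _ => ?_)
    rw [hUval i]
    rfl
  have hysum : ∑ i, g (y i) = ∑ i ∈ Finset.Ico 0 n, g (V i) := by
    rw [← Equiv.sum_comp σy (fun i => g (y i))]
    rw [show Finset.Ico 0 n = Finset.range n from (Finset.range_eq_Ico n).symm]
    rw [← Fin.sum_univ_eq_sum_range (fun m => g (V m)) n]
    refine Finset.sum_congr rfl (fun i _ => ?_)
    rw [hVval i]
    rfl
  rw [hxsum, hysum]
  exact hcore
end

section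
/- For positive integers m ≤ n and any integer r with 0 ≤ r ≤ m−1, the complement of the set J^r_{n,m} in ℤ/nℤ equals J^{n−r−1}_{n,n−m}. -/
/-- The Clough–Douthett set `J^r_{n,m} = { ⌊(ni+r)/m⌋ : 0 ≤ i < m } ⊆ ℤ/nℤ`. -/
def Jset (n m r : ℕ) : Finset (ZMod n) :=
  (Finset.range m).image (fun i => (((n * i + r) / m : ℕ) : ZMod n))

lemma mem_Jset_iff (n m r : ℕ) [NeZero n] (hmn : m ≤ n) (hr : r < n) (k : ZMod n) :
    k ∈ Jset n m r ↔ ((r : ℤ) - (k.val : ℤ) * m) % n < m := by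
  have hn : 0 < n := Nat.pos_of_ne_zero (NeZero.ne n)
  have hnz : (0:ℤ) < (n : ℤ) := by exact_mod_cast hn
  constructor
  · rintro hk
    simp only [Jset, Finset.mem_image, Finset.mem_range] at hk
    obtain ⟨i, hi, hik⟩ := hk
    have hm : 0 < m := lt_of_le_of_lt (Nat.zero_le i) hi
    set K := (n * i + r) / m with hK
    have h1 : K * m ≤ n * i + r := Nat.div_mul_le_self _ _
    have h2 : n * i + r < K * m + m := by
      have h := Nat.div_add_mod (n * i + r) m
      have h' := Nat.mod_lt (n * i + r) hm
      rw [← hK] at h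
      have hcm : K * m = m * K := Nat.mul_comm _ _
      omega
    have hv : ((k.val : ℤ)) ≡ (K : ℤ) [ZMOD (n : ℤ)] := by
      rw [← hik, ZMod.val_natCast]
      push_cast
      exact Int.emod_emod_of_dvd _ dvd_rfl
    have h3 : ((r : ℤ) - (k.val : ℤ) * m) ≡ ((n:ℤ) * i + r - K * m) [ZMOD (n:ℤ)] := by
      have e1 : ((r : ℤ) - (k.val:ℤ) * m) ≡ ((r:ℤ) - (K:ℤ) * m) [ZMOD (n:ℤ)] :=
        Int.ModEq.sub (Int.ModEq.refl _) (hv.mul_right _)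
      have e2 : ((r:ℤ) - (K:ℤ) * m) ≡ ((n:ℤ) * i + r - K * m) [ZMOD (n:ℤ)] :=
        Int.modEq_iff_dvd.mpr ⟨i, by ring⟩
      exact e1.trans e2
    have hb0 : (0:ℤ) ≤ (n:ℤ) * i + r - K * m := by
      have h1' : ((K * m : ℕ) : ℤ) ≤ ((n * i + r : ℕ) : ℤ) := by exact_mod_cast h1
      push_cast at h1'; linarith
    have hb1 : (n:ℤ) * i + r - K * m < m := by
      have h2' : ((n * i + r : ℕ) : ℤ) < ((K * m + m : ℕ) : ℤ) := by exact_mod_cast h2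
      push_cast at h2'; linarith
    have hmn' : (m:ℤ) ≤ n := by exact_mod_cast hmn
    rw [show ((r : ℤ) - (k.val : ℤ) * m) % n = ((n:ℤ) * i + r - K * m) % n from h3,
      Int.emod_eq_of_lt hb0 (lt_of_lt_of_le hb1 hmn')]
    exact hb1
  · intro h
    set a := ((r : ℤ) - (k.val : ℤ) * m) % n with ha
    have ha0 : 0 ≤ a := Int.emod_nonneg _ hnz.ne'
    have hq := Int.mul_ediv_add_emod ((r : ℤ) - (k.val : ℤ) * m) n
    set q := ((r : ℤ) - (k.val : ℤ) * m) / n with hqd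
    have hkv : (k.val : ℤ) ≤ (n:ℤ) - 1 := by
      have := ZMod.val_lt k; omega
    have hkv0 : (0:ℤ) ≤ (k.val : ℤ) := Int.natCast_nonneg _
    have hm0 : (0:ℤ) ≤ (m : ℤ) := Int.natCast_nonneg _
    have hr' : (r : ℤ) < n := by exact_mod_cast hr
    have hr0 : (0:ℤ) ≤ (r:ℤ) := Int.natCast_nonneg _
    have hj : (n:ℤ) * (-q) = (k.val : ℤ) * m + a - r := by linarith
    have hjlb : (0:ℤ) ≤ -q := by
      by_contra hc
      push_neg at hc
      have h1 : -q ≤ -1 := by omega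
      have h2 : (n:ℤ) * (-q) ≤ (n:ℤ) * (-1) :=
        mul_le_mul_of_nonneg_left h1 (le_of_lt hnz)
      have hkm : (0:ℤ) ≤ (k.val:ℤ) * m := mul_nonneg hkv0 hm0
      linarith
    have hjub : -q < (m:ℤ) := by
      have hkm : (k.val:ℤ) * m ≤ ((n:ℤ) - 1) * m := mul_le_mul_of_nonneg_right hkv hm0
      have h2 : (n:ℤ) * (-q) < (n:ℤ) * m := by nlinarith
      exact lt_of_mul_lt_mul_left h2 (le_of_lt hnz)
    set i := (-q).toNat with hi
    have hiz : ((i : ℕ) : ℤ) = -q := Int.toNat_of_nonneg hjlb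
    have him : i < m := by
      have : ((i : ℕ) : ℤ) < (m : ℤ) := by rw [hiz]; exact hjub
      exact_mod_cast this
    have hsa : ((a.toNat : ℕ) : ℤ) = a := Int.toNat_of_nonneg ha0
    have heqn : n * i + r = k.val * m + a.toNat := by
      have hcast : ((n * i + r : ℕ) : ℤ) = ((k.val * m + a.toNat : ℕ) : ℤ) := by
        push_cast [hiz, hsa]
        linarith
      exact_mod_cast hcast
    have hsm : a.toNat < m := by
      have : a < (m : ℤ) := h
      omega
    have hdiv : (n * i + r) / m = k.val := by
      rw [heqn, Nat.mul_comm, Nat.mul_add_div (by omega : 0 < m),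
        Nat.div_eq_of_lt hsm]
      omega
    simp only [Jset, Finset.mem_image, Finset.mem_range]
    exact ⟨i, him, by rw [hdiv]; simp [ZMod.natCast_val, ZMod.cast_id']⟩

/-- For `1 ≤ m ≤ n` and `0 ≤ r ≤ m − 1`, the complement of `J^r_{n,m}` in `ℤ/nℤ`
is `J^{n−r−1}_{n,n−m}`. -/
theorem stmt_5 (n m r : ℕ) [NeZero n] (hm : 1 ≤ m) (hmn : m ≤ n) (hr : r ≤ m - 1) :
    (Jset n m r)ᶜ = Jset n (n - m) (n - r - 1) := by
  have hn : 0 < n := Nat.pos_of_ne_zero (NeZero.ne n)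
  have hnz : (0:ℤ) < (n : ℤ) := by exact_mod_cast hn
  ext k
  rw [Finset.mem_compl, mem_Jset_iff n m r hmn (by omega) k,
    mem_Jset_iff n (n - m) (n - r - 1) (by omega) (by omega) k]
  set a := ((r : ℤ) - (k.val : ℤ) * m) % n with ha
  have ha0 : 0 ≤ a := Int.emod_nonneg _ hnz.ne'
  have ha1 : a < n := Int.emod_lt_of_pos _ hnz
  have hq := Int.mul_ediv_add_emod ((r : ℤ) - (k.val : ℤ) * m) n
  set q := ((r : ℤ) - (k.val : ℤ) * m) / n with hqd
  have hc1 : ((n - r - 1 : ℕ) : ℤ) = (n:ℤ) - r - 1 := by omega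
  have hc2 : ((n - m : ℕ) : ℤ) = (n:ℤ) - m := by omega
  have hx : ((n - r - 1 : ℕ) : ℤ) - (k.val : ℤ) * ((n - m : ℕ) : ℤ)
      = (n:ℤ) * (1 - q - k.val) + ((n:ℤ) - 1 - a - n) := by
    rw [hc1, hc2]; ring_nf; linarith
  have hb : (((n - r - 1 : ℕ) : ℤ) - (k.val : ℤ) * ((n - m : ℕ) : ℤ)) % n
      = (n:ℤ) - 1 - a := by
    rw [hx, add_comm, Int.add_mul_emod_self_left]
    have : ((n:ℤ) - 1 - a - n) % n = ((n:ℤ) - 1 - a - n + n * 1) % n :=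
      (Int.add_mul_emod_self_left ..).symm
    rw [this]
    have hre : (n:ℤ) - 1 - a - n + n * 1 = (n:ℤ) - 1 - a := by ring
    rw [hre, Int.emod_eq_of_lt (by omega) (by omega)]
  rw [hb]
  omega
end

section
/- Let G be a finite simple connected distance degree regular graph with diameter D, and let g : {1,...,D} → ℝ be any function. Then for every nonempty A ⊆ V(G), E_g(A) − E_g(V(G)∖A) = (2|A|/|V(G)| − 1) · E_g(V(G)). -/
lemma dist_lt_card' {V : Type*} [Fintype V] [DecidableEq V] (G : SimpleGraph V)
    (hconn : G.Connected) (u v : V) : G.dist u v < Fintype.card V := by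
  obtain ⟨p⟩ := hconn.preconnected u v
  calc G.dist u v ≤ p.bypass.length := SimpleGraph.dist_le _
    _ < Fintype.card V := p.bypass_isPath.length_lt

lemma rowsum_const {V : Type*} [Fintype V] [DecidableEq V] (G : SimpleGraph V)
    (hconn : G.Connected)
    (hddr : ∀ (i : ℕ) (u v : V),
      (Finset.univ.filter (fun w => G.dist u w = i)).card =
        (Finset.univ.filter (fun w => G.dist v w = i)).card)
    (g : ℕ → ℝ) (u v : V) :
    ∑ w, g (G.dist u w) = ∑ w, g (G.dist v w) := by
  have key : ∀ x : V, ∑ w, g (G.dist x w) =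
      ∑ i ∈ Finset.range (Fintype.card V),
        ((Finset.univ.filter (fun w => G.dist x w = i)).card : ℝ) * g i := by
    intro x
    rw [← Finset.sum_fiberwise_of_maps_to' (g := fun w => G.dist x w)
      (fun w _ => Finset.mem_range.mpr (dist_lt_card' G hconn x w)) g]
    simp [Finset.sum_const, mul_comm]
  rw [key u, key v]
  exact Finset.sum_congr rfl fun i _ => by rw [hddr i u v]

/-- The `g`-energy of a set of vertices: the sum of `g` of the pairwise distances over all
unordered pairs of distinct vertices of `A`. -/
noncomputable def energy {V : Type*} [Fintype V] [DecidableEq V] (G : SimpleGraph V)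
    (g : ℕ → ℝ) (A : Finset V) : ℝ :=
  (∑ p ∈ A.offDiag, g (G.dist p.1 p.2)) / 2

/-- For a finite connected distance degree regular graph `G` and any `g`, and any nonempty
`A ⊆ V(G)`: `E_g(A) − E_g(V∖A) = (2|A|/|V| − 1)·E_g(V)`. -/
theorem stmt_9 {V : Type*} [Fintype V] [DecidableEq V] (G : SimpleGraph V)
    (hconn : G.Connected)
    (hddr : ∀ (i : ℕ) (u v : V),
      (Finset.univ.filter (fun w => G.dist u w = i)).card =
        (Finset.univ.filter (fun w => G.dist v w = i)).card)
    (g : ℕ → ℝ) (A : Finset V) (hA : A.Nonempty) :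
    energy G g A - energy G g Aᶜ =
      (2 * (A.card : ℝ) / (Fintype.card V : ℝ) - 1) * energy G g Finset.univ := by
  obtain ⟨x₀, hx₀⟩ := hA
  haveI : Nonempty V := ⟨x₀⟩
  set s : ℝ := ∑ w, g (G.dist x₀ w) with hs
  have hrow : ∀ a : V, ∑ b, g (G.dist a b) = s := fun a => rowsum_const G hconn hddr g a x₀
  -- off-diagonal sum in terms of full product sum
  have hsplit : ∀ B : Finset V, (∑ p ∈ B.offDiag, g (G.dist p.1 p.2)) =
      (∑ a ∈ B, ∑ b ∈ B, g (G.dist a b)) - (B.card : ℝ) * g 0 := by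
    intro B
    have hprod : ∑ a ∈ B, ∑ b ∈ B, g (G.dist a b)
        = ∑ p ∈ B ×ˢ B, g (G.dist p.1 p.2) := by rw [Finset.sum_product]
    rw [hprod, ← Finset.sum_filter_add_sum_filter_not (B ×ˢ B) (fun p => p.1 ≠ p.2)]
    have h1 : (B ×ˢ B).filter (fun p => p.1 ≠ p.2) = B.offDiag := by
      ext p; simp [Finset.mem_offDiag, and_assoc]
    have h2 : (B ×ˢ B).filter (fun p => ¬ p.1 ≠ p.2) = B.diag := by
      ext ⟨a, b⟩
      simp only [Finset.mem_filter, Finset.mem_product, Finset.mem_diag, ne_eq, not_not]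
      constructor
      · rintro ⟨⟨ha, -⟩, rfl⟩; exact ⟨ha, rfl⟩
      · rintro ⟨ha, rfl⟩; exact ⟨⟨ha, ha⟩, rfl⟩
    rw [h1, h2]
    have h3 : ∑ p ∈ B.diag, g (G.dist p.1 p.2) = (B.card : ℝ) * g 0 := by
      rw [Finset.sum_congr rfl (fun p hp => by
        rw [(Finset.mem_diag.mp hp).2, SimpleGraph.dist_self])]
      rw [Finset.sum_const, Finset.diag_card, nsmul_eq_mul]
    rw [h3]; ring
  -- cross sums
  set X : ℝ := ∑ a ∈ A, ∑ b ∈ Aᶜ, g (G.dist a b) with hX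
  have hXsymm : ∑ a ∈ Aᶜ, ∑ b ∈ A, g (G.dist a b) = X := by
    rw [hX, Finset.sum_comm]
    exact Finset.sum_congr rfl fun a _ => Finset.sum_congr rfl fun b _ => by
      rw [SimpleGraph.dist_comm]
  have hPA : (∑ a ∈ A, ∑ b ∈ A, g (G.dist a b)) = (A.card : ℝ) * s - X := by
    have : ∀ a : V, (∑ b ∈ A, g (G.dist a b)) + ∑ b ∈ Aᶜ, g (G.dist a b) = s := by
      intro a; rw [Finset.sum_add_sum_compl]; exact hrow a
    have h := Finset.sum_congr rfl (fun a (_ : a ∈ A) => this a)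
    rw [Finset.sum_add_distrib] at h
    rw [Finset.sum_const, nsmul_eq_mul] at h
    linarith [h]
  have hPAc : (∑ a ∈ Aᶜ, ∑ b ∈ Aᶜ, g (G.dist a b)) = (Aᶜ.card : ℝ) * s - X := by
    have : ∀ a : V, (∑ b ∈ A, g (G.dist a b)) + ∑ b ∈ Aᶜ, g (G.dist a b) = s := by
      intro a; rw [Finset.sum_add_sum_compl]; exact hrow a
    have h := Finset.sum_congr rfl (fun a (_ : a ∈ Aᶜ) => this a)
    rw [Finset.sum_add_distrib] at h
    rw [Finset.sum_const, nsmul_eq_mul, hXsymm] at h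
    linarith [h]
  have hPU : (∑ a : V, ∑ b : V, g (G.dist a b)) = (Fintype.card V : ℝ) * s := by
    rw [Finset.sum_congr rfl (fun a (_ : a ∈ Finset.univ) => hrow a)]
    rw [Finset.sum_const, nsmul_eq_mul, Finset.card_univ]
  have hcompl : (Aᶜ.card : ℝ) = (Fintype.card V : ℝ) - (A.card : ℝ) := by
    rw [Finset.card_compl]
    exact_mod_cast Nat.cast_sub (Finset.card_le_univ A)
  have hn : (0 : ℝ) < (Fintype.card V : ℝ) := by
    exact_mod_cast Fintype.card_pos
  unfold energy
  rw [hsplit A, hsplit Aᶜ, hsplit Finset.univ, hPA, hPAc, hPU, hcompl, Finset.card_univ]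
  field_simp
  ring
end

section
/- Let G be a finite simple connected distance degree regular graph with diameter D, and g : {1,...,D} → ℝ. If A ⊆ V(G) is a minimizer of E_g (i.e., E_g(A) ≤ E_g(B) for all B ⊆ V(G) with |B| = |A|), then V(G)∖A is a minimizer of E_g among subsets of size |V(G)| − |A|. -/
/-- In a finite connected distance degree regular graph, the complement of a minimizer of
`E_g` is a minimizer of `E_g` (among subsets of cardinality `|V| − |A|`). -/
theorem stmt_10 {V : Type*} [Fintype V] [DecidableEq V] (G : SimpleGraph V)
    (hconn : G.Connected)
    (hddr : ∀ (i : ℕ) (u v : V),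
      (Finset.univ.filter (fun w => G.dist u w = i)).card =
        (Finset.univ.filter (fun w => G.dist v w = i)).card)
    (g : ℕ → ℝ) (A : Finset V)
    (hmin : ∀ B : Finset V, B.card = A.card → energy G g A ≤ energy G g B) :
    ∀ B : Finset V, B.card = Aᶜ.card → energy G g Aᶜ ≤ energy G g B := by
  classical
  have hne : Nonempty V := hconn.nonempty
  -- distance is bounded by the number of vertices
  have hdlt : ∀ u v : V, G.dist u v < Fintype.card V := by
    intro u v
    obtain ⟨p⟩ := hconn u v
    calc G.dist u v ≤ p.bypass.length := SimpleGraph.dist_le _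
      _ < Fintype.card V := p.bypass_isPath.length_lt
  -- the "total" T = ∑ v, g (dist u v) is independent of u
  obtain ⟨u₀⟩ := hne
  set T : ℝ := ∑ v, g (G.dist u₀ v) with hT
  have hrow : ∀ u : V, ∑ v, g (G.dist u v) = T := by
    intro u
    have key : ∀ w : V, ∑ v, g (G.dist w v)
        = ∑ i ∈ Finset.range (Fintype.card V),
            ((Finset.univ.filter (fun x => G.dist w x = i)).card : ℝ) * g i := by
      intro w
      rw [← Finset.sum_fiberwise_of_maps_to
        (fun v _ => Finset.mem_range.2 (hdlt w v)) (fun v => g (G.dist w v))]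
      refine Finset.sum_congr rfl fun i _ => ?_
      rw [Finset.sum_congr rfl fun v hv => by
        rw [(Finset.mem_filter.1 hv).2]]
      rw [Finset.sum_const, nsmul_eq_mul]
    rw [key u, hT, key u₀]
    exact Finset.sum_congr rfl fun i _ => by rw [hddr i u u₀]
  have hcol : ∀ v : V, ∑ u, g (G.dist u v) = T := by
    intro v
    rw [← hrow v]
    exact Finset.sum_congr rfl fun u _ => by rw [SimpleGraph.dist_comm]
  -- the full double sum over a set S
  set Q : Finset V → ℝ := fun S => ∑ u ∈ S, ∑ v ∈ S, g (G.dist u v) with hQ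
  -- relation between Q and the off-diagonal sum
  have hQP : ∀ S : Finset V,
      Q S = (∑ p ∈ S.offDiag, g (G.dist p.1 p.2)) + S.card * g 0 := by
    intro S
    have : Q S = ∑ p ∈ S ×ˢ S, g (G.dist p.1 p.2) := by
      rw [hQ, Finset.sum_product]
    rw [this, ← Finset.diag_union_offDiag,
      Finset.sum_union (Finset.disjoint_diag_offDiag S), Finset.sum_diag]
    simp [SimpleGraph.dist_self, add_comm, mul_comm]
  -- cross sums
  have hcross1 : ∀ S : Finset V,
      ∑ u ∈ S, ∑ v ∈ Sᶜ, g (G.dist u v) = S.card * T - Q S := by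
    intro S
    have : ∀ u ∈ S, ∑ v ∈ Sᶜ, g (G.dist u v) = T - ∑ v ∈ S, g (G.dist u v) := by
      intro u _
      rw [← hrow u, ← Finset.sum_add_sum_compl S (fun v => g (G.dist u v))]
      ring
    rw [Finset.sum_congr rfl this, Finset.sum_sub_distrib, Finset.sum_const,
      nsmul_eq_mul]
  have hcross2 : ∀ S : Finset V,
      ∑ u ∈ Sᶜ, ∑ v ∈ S, g (G.dist u v) = S.card * T - Q S := by
    intro S
    rw [Finset.sum_comm]
    have : ∀ v ∈ S, ∑ u ∈ Sᶜ, g (G.dist u v) = T - ∑ u ∈ S, g (G.dist u v) := by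
      intro v _
      rw [← hcol v, ← Finset.sum_add_sum_compl S (fun u => g (G.dist u v))]
      ring
    rw [Finset.sum_congr rfl this, Finset.sum_sub_distrib, Finset.sum_const,
      nsmul_eq_mul]
    congr 1
    rw [hQ]
    exact Finset.sum_comm
  -- key identity : Q of the complement
  have hQc : ∀ S : Finset V,
      Q Sᶜ = Q Finset.univ + Q S - 2 * S.card * T := by
    intro S
    have h1 : Q Finset.univ = ∑ u, (∑ v ∈ S, g (G.dist u v) + ∑ v ∈ Sᶜ, g (G.dist u v)) := by
      rw [hQ]
      exact Finset.sum_congr rfl fun u _ =>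
        (Finset.sum_add_sum_compl S (fun v => g (G.dist u v))).symm
    have h2 : Q Finset.univ =
        (Q S + ∑ u ∈ S, ∑ v ∈ Sᶜ, g (G.dist u v)) +
        ((∑ u ∈ Sᶜ, ∑ v ∈ S, g (G.dist u v)) + Q Sᶜ) := by
      rw [h1, Finset.sum_add_distrib,
        ← Finset.sum_add_sum_compl S (fun u => ∑ v ∈ S, g (G.dist u v)),
        ← Finset.sum_add_sum_compl S (fun u => ∑ v ∈ Sᶜ, g (G.dist u v))]
      ring
    rw [hcross1 S, hcross2 S] at h2
    linarith
  -- energy of the complement in terms of the energy of the set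
  have hE : ∀ S : Finset V, energy G g Sᶜ =
      energy G g S +
        (Q Finset.univ - 2 * S.card * T + ((S.card : ℝ) - (Sᶜ.card : ℝ)) * g 0) / 2 := by
    intro S
    have e1 := hQP S
    have e2 := hQP Sᶜ
    have e3 := hQc S
    unfold energy
    have e1' : (∑ p ∈ S.offDiag, g (G.dist p.1 p.2)) = Q S - S.card * g 0 := by
      linarith
    have e2' : (∑ p ∈ Sᶜ.offDiag, g (G.dist p.1 p.2)) = Q Sᶜ - Sᶜ.card * g 0 := by
      linarith
    rw [e1', e2', e3]
    ring
  -- conclude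
  intro B hB
  have hBc : Bᶜ.card = A.card := by
    have h1 : Bᶜ.card = Fintype.card V - B.card := Finset.card_compl B
    have h2 : Aᶜ.card = Fintype.card V - A.card := Finset.card_compl A
    have h3 : A.card ≤ Fintype.card V := Finset.card_le_univ A
    have h4 : B.card ≤ Fintype.card V := Finset.card_le_univ B
    omega
  have h5 := hmin Bᶜ hBc
  have hEA := hE A
  have hEB := hE Bᶜ
  rw [compl_compl] at hEB
  have hc1 : ((Bᶜ.card : ℝ)) = (A.card : ℝ) := by exact_mod_cast hBc
  have hc2 : ((B.card : ℝ)) = (Aᶜ.card : ℝ) := by exact_mod_cast hB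
  rw [hc1, hc2] at hEB
  linarith
end

section
/- Let G be a finite simple connected graph with diameter D and suppose there is a function g : {1,...,D} → ℝ such that {g(1),...,g(D)} is linearly independent over ℚ and the complement of every minimizer of E_g is again a minimizer of E_g. Then G is distance degree regular. -/
/-- If there is `g` with `{g(1),...,g(D)}` linearly independent over `ℚ` (where `D` is the
diameter) such that the complement of every minimizer of `E_g` is again a minimizer, then
`G` is distance degree regular. -/
theorem stmt_11 {V : Type*} [Fintype V] [DecidableEq V] (G : SimpleGraph V)
    (hconn : G.Connected) (g : ℕ → ℝ)
    (hlin : LinearIndependent ℚ (fun j : Fin G.diam => g (j + 1)))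
    (hcomp : ∀ A : Finset V,
      (∀ B : Finset V, B.card = A.card → energy G g A ≤ energy G g B) →
      (∀ B : Finset V, B.card = Aᶜ.card → energy G g Aᶜ ≤ energy G g B)) :
    ∀ (i : ℕ) (u v : V),
      (Finset.univ.filter (fun w => G.dist u w = i)).card =
        (Finset.univ.filter (fun w => G.dist v w = i)).card := by
  classical
  have _inst : Nonempty V := hconn.nonempty
  -- The extended diameter is finite.
  have hD : G.ediam ≠ ⊤ := by
    refine ne_top_of_le_ne_top (ENat.coe_ne_top (Fintype.card V))
      (SimpleGraph.ediam_le_of_edist_le fun u v => ?_)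
    obtain ⟨p⟩ := hconn u v
    calc G.edist u v ≤ ((p.toPath : G.Walk u v).length : ℕ∞) := SimpleGraph.edist_le _
      _ ≤ (Fintype.card V : ℕ∞) := by exact_mod_cast (p.toPath.2.length_lt).le
  have hdist : ∀ u w : V, G.dist u w ≤ G.diam := fun u w => SimpleGraph.dist_le_diam hD
  -- counts and row sums
  let c : V → ℕ → ℕ := fun u i => (Finset.univ.filter (fun w => G.dist u w = i)).card
  let R : V → ℝ := fun u => ∑ w, g (G.dist u w)
  let T : Finset V → ℝ := fun A => ∑ x ∈ A, ∑ y ∈ A, g (G.dist x y)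
  -- energy in terms of T
  have henergy : ∀ A : Finset V, energy G g A = (T A - A.card * g 0) / 2 := by
    intro A
    have h1 : ∑ p ∈ A.diag, g (G.dist p.1 p.2) + ∑ p ∈ A.offDiag, g (G.dist p.1 p.2)
        = T A := by
      rw [← Finset.sum_union (Finset.disjoint_diag_offDiag A), Finset.diag_union_offDiag,
        Finset.sum_product]
    have h2 : ∑ p ∈ A.diag, g (G.dist p.1 p.2) = A.card * g 0 := by
      rw [Finset.sum_diag A (fun p => g (G.dist p.1 p.2))]
      simp [SimpleGraph.dist_self, mul_comm]
    rw [energy]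
    rw [h2] at h1
    rw [← h1]
    ring
  -- singletons are minimizers
  have hsing : ∀ b : V, energy G g ({b} : Finset V) = 0 := by
    intro b; simp [energy, Finset.offDiag_singleton]
  have hmin : ∀ u : V, ∀ B : Finset V, B.card = ({u} : Finset V).card →
      energy G g ({u} : Finset V) ≤ energy G g B := by
    intro u B hB
    rw [Finset.card_singleton] at hB
    obtain ⟨b, rfl⟩ := Finset.card_eq_one.mp hB
    rw [hsing, hsing]
  -- complements of singletons all have the same energy
  have hcompl : ∀ u v : V, energy G g (({u} : Finset V)ᶜ) = energy G g (({v} : Finset V)ᶜ) := by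
    intro u v
    have h1 := hcomp {u} (hmin u) (({v} : Finset V)ᶜ) (by simp [Finset.card_compl])
    have h2 := hcomp {v} (hmin v) (({u} : Finset V)ᶜ) (by simp [Finset.card_compl])
    linarith
  have hcardc : ∀ u : V, ((({u} : Finset V)ᶜ)).card = Fintype.card V - 1 := by
    intro u; simp [Finset.card_compl]
  have hTc : ∀ u v : V, T (({u} : Finset V)ᶜ) = T (({v} : Finset V)ᶜ) := by
    intro u v
    have h := hcompl u v
    rw [henergy, henergy, hcardc, hcardc] at h
    linarith
  -- splitting sums off the complement of a singleton
  have hsplit : ∀ (f : V → ℝ) (u : V), ∑ x, f x = ∑ x ∈ (({u} : Finset V)ᶜ), f x + f u := by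
    intro f u
    rw [← Finset.sum_compl_add_sum ({u} : Finset V) f, Finset.sum_singleton]
  have hTdecomp : ∀ u : V, T Finset.univ = T (({u} : Finset V)ᶜ) + 2 * R u - g 0 := by
    intro u
    have h1 : T Finset.univ = ∑ x ∈ (({u} : Finset V)ᶜ), (∑ y, g (G.dist x y)) + R u :=
      hsplit _ u
    have h2 : ∀ x : V, ∑ y, g (G.dist x y)
        = ∑ y ∈ (({u} : Finset V)ᶜ), g (G.dist x y) + g (G.dist x u) := fun x =>
      hsplit _ u
    have h4 : ∑ x, g (G.dist x u) = R u := by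
      exact Finset.sum_congr rfl fun x _ => by rw [SimpleGraph.dist_comm]
    have h3 : ∑ x ∈ (({u} : Finset V)ᶜ), g (G.dist x u) = R u - g 0 := by
      have h5 := hsplit (fun x => g (G.dist x u)) u
      rw [h4, SimpleGraph.dist_self] at h5
      linarith
    have h6 : ∑ x ∈ (({u} : Finset V)ᶜ), (∑ y, g (G.dist x y))
        = T (({u} : Finset V)ᶜ) + (R u - g 0) := by
      rw [← h3, ← Finset.sum_add_distrib]
      exact Finset.sum_congr rfl fun x _ => h2 x
    rw [h1, h6]; ring
  have hRow : ∀ u v : V, R u = R v := by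
    intro u v
    have h1 := hTdecomp u
    have h2 := hTdecomp v
    rw [hTc u v] at h1
    linarith
  -- fiberwise decomposition of the row sum
  have hfiber : ∀ u : V, R u = ∑ i ∈ Finset.range (G.diam + 1), (c u i : ℝ) * g i := by
    intro u
    have hmaps : ∀ w ∈ (Finset.univ : Finset V), G.dist u w ∈ Finset.range (G.diam + 1) :=
      fun w _ => Finset.mem_range.mpr (Nat.lt_succ_of_le (hdist u w))
    have := Finset.sum_fiberwise_of_maps_to hmaps (fun w => g (G.dist u w))
    rw [show R u = ∑ w, g (G.dist u w) from rfl, ← this]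
    refine Finset.sum_congr rfl fun i _ => ?_
    rw [Finset.sum_congr rfl (fun w hw => by rw [(Finset.mem_filter.mp hw).2]),
      Finset.sum_const, nsmul_eq_mul]
  have hc0 : ∀ u : V, c u 0 = 1 := by
    intro u
    have h : Finset.univ.filter (fun w => G.dist u w = 0) = {u} := by
      ext w
      simp [hconn.dist_eq_zero_iff, eq_comm]
    show (Finset.univ.filter (fun w => G.dist u w = 0)).card = 1
    rw [h, Finset.card_singleton]
  -- linear independence gives equality of the counts at positive distances
  have hkey : ∀ (u v : V) (j : ℕ), j < G.diam → c u (j + 1) = c v (j + 1) := by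
    intro u v j hj
    have h := hRow u v
    rw [hfiber, hfiber, Finset.sum_range_succ', Finset.sum_range_succ', hc0, hc0] at h
    have h' : ∑ i ∈ Finset.range G.diam,
        (((c u (i + 1) : ℝ)) - (c v (i + 1) : ℝ)) * g (i + 1) = 0 := by
      have := Finset.sum_sub_distrib (s := Finset.range G.diam)
        (f := fun i => (c u (i + 1) : ℝ) * g (i + 1))
        (g := fun i => (c v (i + 1) : ℝ) * g (i + 1))
      simp only [sub_mul]
      rw [this]
      linarith
    have h'' : ∑ jj : Fin G.diam,
        (((c u ((jj : ℕ) + 1) : ℚ)) - (c v ((jj : ℕ) + 1) : ℚ)) • g ((jj : ℕ) + 1) = 0 := by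
      rw [show (0 : ℝ) = ∑ i ∈ Finset.range G.diam,
          (((c u (i + 1) : ℝ)) - (c v (i + 1) : ℝ)) * g (i + 1) from h'.symm,
        ← Fin.sum_univ_eq_sum_range (fun i =>
          (((c u (i + 1) : ℝ)) - (c v (i + 1) : ℝ)) * g (i + 1))]
      refine Finset.sum_congr rfl fun jj _ => ?_
      rw [Rat.smul_def]
      push_cast
      ring
    have hz := Fintype.linearIndependent_iff.mp hlin
      (fun jj : Fin G.diam => ((c u ((jj : ℕ) + 1) : ℚ)) - (c v ((jj : ℕ) + 1) : ℚ)) h''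
      ⟨j, hj⟩
    have : (c u (j + 1) : ℚ) = (c v (j + 1) : ℚ) := by
      have := sub_eq_zero.mp hz
      exact_mod_cast this
    exact_mod_cast this
  -- conclusion
  intro i u v
  match i with
  | 0 =>
    show c u 0 = c v 0
    rw [hc0, hc0]
  | (j + 1) =>
    by_cases hj : j < G.diam
    · exact hkey u v j hj
    · have hempty : ∀ x : V, Finset.univ.filter (fun w => G.dist x w = j + 1) = ∅ := by
        intro x
        ext w
        simp only [Finset.mem_filter, Finset.mem_univ, true_and, Finset.notMem_empty,
          iff_false]
        intro h
        have := hdist x w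
        omega
      rw [hempty u, hempty v]
end

section
/- Let m be even with 2 ≤ m ≤ n. A set A of m vertices of P_n is a maximizer of the Wiener index W among all m-element subsets of {1,...,n} if and only if A = {1,...,m/2} ∪ {n − m/2 + 1,...,n}. -/
open Finset

/-- The Wiener index of a finite set of vertices of the path `{1,...,n}`: the sum of
`|u − v|` over unordered pairs of distinct elements. -/
def Wpath (A : Finset ℕ) : ℤ :=
  ∑ p ∈ A.offDiag.filter (fun p => p.1 < p.2), ((p.2 : ℤ) - (p.1 : ℤ))

lemma pair_sum_eq (m : ℕ) (f : Fin m → ℤ) :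
    ∑ p ∈ (univ ×ˢ univ : Finset (Fin m × Fin m)).filter (fun p => p.1 < p.2),
      (f p.2 - f p.1)
    = ∑ i : Fin m, (2 * (i : ℤ) - ((m : ℤ) - 1)) * f i := by
  have hA : ∑ p ∈ (univ ×ˢ univ : Finset (Fin m × Fin m)).filter (fun p => p.1 < p.2),
      f p.2 = ∑ j : Fin m, (j : ℤ) * f j := by
    rw [Finset.sum_filter, Finset.sum_product]
    rw [Finset.sum_comm]
    refine Finset.sum_congr rfl fun j _ => ?_
    rw [← Finset.sum_filter]
    show ∑ _a ∈ filter (fun a => a < j) univ, f j = _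
    rw [Finset.sum_const, Finset.filter_gt_eq_Iio, Fin.card_Iio]
    simp [mul_comm]
  have hB : ∑ p ∈ (univ ×ˢ univ : Finset (Fin m × Fin m)).filter (fun p => p.1 < p.2),
      f p.1 = ∑ i : Fin m, ((m : ℤ) - 1 - (i : ℤ)) * f i := by
    rw [Finset.sum_filter, Finset.sum_product]
    refine Finset.sum_congr rfl fun i _ => ?_
    rw [← Finset.sum_filter]
    show ∑ _a ∈ filter (fun a => i < a) univ, f i = _
    rw [Finset.sum_const, Finset.filter_lt_eq_Ioi, Fin.card_Ioi]
    have : ((m - 1 - (i : ℕ) : ℕ) : ℤ) = (m : ℤ) - 1 - (i : ℤ) := by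
      have := i.2; omega
    simp [this, mul_comm]
  rw [Finset.sum_sub_distrib, hA, hB, ← Finset.sum_sub_distrib]
  exact Finset.sum_congr rfl fun i _ => by ring

lemma Wpath_eq {m : ℕ} (hm : 0 < m) (B : Finset ℕ) (hB : B.card = m) :
    Wpath B = ∑ p ∈ (univ ×ˢ univ : Finset (Fin m × Fin m)).filter (fun p => p.1 < p.2),
      ((B.orderEmbOfFin hB p.2 : ℤ) - (B.orderEmbOfFin hB p.1 : ℤ)) := by
  classical
  set f : Fin m → ℕ := fun i => B.orderEmbOfFin hB i with hf
  set r : ℕ → Fin m := fun u =>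
    if h : u ∈ B then (B.orderIsoOfFin hB).symm ⟨u, h⟩ else ⟨0, hm⟩ with hr
  have hfr : ∀ u, u ∈ B → f (r u) = u := by
    intro u hu
    simp only [hr, dif_pos hu, hf, ← Finset.coe_orderIsoOfFin_apply,
      OrderIso.apply_symm_apply]
  have hrf : ∀ i : Fin m, r (f i) = i := by
    intro i
    have hmem : f i ∈ B := Finset.orderEmbOfFin_mem B hB i
    simp only [hr, dif_pos hmem]
    have : (⟨f i, hmem⟩ : {x // x ∈ B}) = B.orderIsoOfFin hB i := by
      ext; simp [hf, Finset.coe_orderIsoOfFin_apply]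
    rw [this, OrderIso.symm_apply_apply]
  have hmono : StrictMono f := (B.orderEmbOfFin hB).strictMono
  unfold Wpath
  refine Finset.sum_nbij' (i := fun q => (r q.1, r q.2)) (j := fun p => (f p.1, f p.2))
    ?_ ?_ ?_ ?_ ?_
  · rintro ⟨u, v⟩ hq
    simp only [Finset.mem_filter, Finset.mem_offDiag] at hq
    obtain ⟨⟨hu, hv, hne⟩, hlt⟩ := hq
    simp only [Finset.mem_filter, Finset.mem_product, Finset.mem_univ, true_and,
      and_true]
    refine hmono.lt_iff_lt.mp ?_
    rw [hfr u hu, hfr v hv]; exact hlt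
  · rintro ⟨i, j⟩ hp
    simp only [Finset.mem_filter, Finset.mem_product, Finset.mem_univ, true_and] at hp
    simp only [Finset.mem_filter, Finset.mem_offDiag]
    exact ⟨⟨Finset.orderEmbOfFin_mem B hB i, Finset.orderEmbOfFin_mem B hB j,
      (hmono.injective.ne (ne_of_lt hp))⟩, hmono hp⟩
  · rintro ⟨u, v⟩ hq
    simp only [Finset.mem_filter, Finset.mem_offDiag] at hq
    obtain ⟨⟨hu, hv, _⟩, _⟩ := hq
    simp [hfr u hu, hfr v hv]
  · rintro ⟨i, j⟩ _
    simp [hrf]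
  · rintro ⟨u, v⟩ hq
    simp only [Finset.mem_filter, Finset.mem_offDiag] at hq
    obtain ⟨⟨hu, hv, _⟩, _⟩ := hq
    have h1 := hfr u hu
    have h2 := hfr v hv
    simp only [hf] at h1 h2
    rw [h1, h2]

lemma lb_aux {m n : ℕ} (B : Finset ℕ) (hBn : B ⊆ Finset.Icc 1 n) (hB : B.card = m)
    (i : Fin m) : (i : ℕ) + 1 ≤ B.orderEmbOfFin hB i := by
  obtain ⟨i, hi⟩ := i
  induction i with
  | zero =>
      have := hBn (Finset.orderEmbOfFin_mem B hB ⟨0, hi⟩)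
      exact (Finset.mem_Icc.mp this).1
  | succ j ih =>
      have hj : j < m := Nat.lt_of_succ_lt hi
      have h1 := ih hj
      have h2 : B.orderEmbOfFin hB ⟨j, hj⟩ < B.orderEmbOfFin hB ⟨j + 1, hi⟩ :=
        (B.orderEmbOfFin hB).strictMono (by simp [Fin.mk_lt_mk])
      simp only [Fin.val_mk] at h1 ⊢
      omega

lemma ub_aux {m n : ℕ} (B : Finset ℕ) (hBn : B ⊆ Finset.Icc 1 n) (hB : B.card = m)
    (i : Fin m) : B.orderEmbOfFin hB i + (m - 1 - (i : ℕ)) ≤ n := by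
  suffices h : ∀ d : ℕ, ∀ i : Fin m, m - 1 - (i : ℕ) = d →
      B.orderEmbOfFin hB i + d ≤ n by exact h _ i rfl
  intro d
  induction d with
  | zero =>
      intro i _
      have := hBn (Finset.orderEmbOfFin_mem B hB i)
      have := (Finset.mem_Icc.mp this).2
      omega
  | succ d ih =>
      intro i hd
      have hi1 : (i : ℕ) + 1 < m := by omega
      have h1 := ih ⟨(i : ℕ) + 1, hi1⟩ (by simp; omega)
      have h2 : B.orderEmbOfFin hB i < B.orderEmbOfFin hB ⟨(i : ℕ) + 1, hi1⟩ :=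
        (B.orderEmbOfFin hB).strictMono (by simp [Fin.lt_def])
      omega

lemma opt_card (n k : ℕ) (hk : 1 ≤ k) (hkn : 2 * k ≤ n) :
    (Finset.Icc 1 k ∪ Finset.Icc (n - k + 1) n).card = 2 * k := by
  rw [Finset.card_union_of_disjoint]
  · rw [Nat.card_Icc, Nat.card_Icc]; omega
  · rw [Finset.disjoint_left]
    intro a ha hb
    simp only [Finset.mem_Icc] at ha hb
    omega

lemma opt_sub (n k : ℕ) (hk : 1 ≤ k) (hkn : 2 * k ≤ n) :
    (Finset.Icc 1 k ∪ Finset.Icc (n - k + 1) n) ⊆ Finset.Icc 1 n := by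
  intro a ha
  simp only [Finset.mem_union, Finset.mem_Icc] at ha ⊢
  omega

lemma core (n k : ℕ) (hk : 1 ≤ k) (hkn : 2 * k ≤ n)
    (B : Finset ℕ) (hBsub : B ⊆ Finset.Icc 1 n) (hBcard : B.card = 2 * k) :
    Wpath B ≤ Wpath (Finset.Icc 1 k ∪ Finset.Icc (n - k + 1) n) ∧
      (B ≠ Finset.Icc 1 k ∪ Finset.Icc (n - k + 1) n →
        Wpath B < Wpath (Finset.Icc 1 k ∪ Finset.Icc (n - k + 1) n)) := by
  classical
  set opt := Finset.Icc 1 k ∪ Finset.Icc (n - k + 1) n with hopt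
  have hoptcard : opt.card = 2 * k := opt_card n k hk hkn
  have hoptsub : opt ⊆ Finset.Icc 1 n := opt_sub n k hk hkn
  set g : Fin (2 * k) → ℕ := fun i => if (i : ℕ) < k then (i : ℕ) + 1
    else n - 2 * k + 1 + (i : ℕ) with hg
  have hgmono : StrictMono g := by
    intro i j hij
    rw [Fin.lt_def] at hij
    have hi2 := i.2
    have hj2 := j.2
    simp only [hg]
    split <;> split <;> omega
  have hgopt : ∀ i, g i ∈ opt := by
    intro i
    have hi2 := i.2
    simp only [hg, hopt, Finset.mem_union, Finset.mem_Icc]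
    split
    · left; omega
    · right; omega
  have hgu : g = fun i => opt.orderEmbOfFin hoptcard i :=
    Finset.orderEmbOfFin_unique hoptcard hgopt hgmono
  have hm0 : 0 < 2 * k := by omega
  have hWopt : Wpath opt
      = ∑ i : Fin (2 * k), (2 * (i : ℤ) - (((2 * k : ℕ) : ℤ) - 1)) * (g i : ℤ) := by
    rw [Wpath_eq hm0 opt hoptcard]
    rw [pair_sum_eq (2 * k) (fun i => (opt.orderEmbOfFin hoptcard i : ℤ))]
    rw [hgu]
  have hWB : Wpath B
      = ∑ i : Fin (2 * k), (2 * (i : ℤ) - (((2 * k : ℕ) : ℤ) - 1))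
          * (B.orderEmbOfFin hBcard i : ℤ) := by
    rw [Wpath_eq hm0 B hBcard]
    rw [pair_sum_eq (2 * k) (fun i => (B.orderEmbOfFin hBcard i : ℤ))]
  -- termwise bounds
  have hle : ∀ i : Fin (2 * k),
      (2 * (i : ℤ) - (((2 * k : ℕ) : ℤ) - 1)) * (B.orderEmbOfFin hBcard i : ℤ)
        ≤ (2 * (i : ℤ) - (((2 * k : ℕ) : ℤ) - 1)) * (g i : ℤ) := by
    intro i
    have hlb := lb_aux B hBsub hBcard i
    have hub := ub_aux B hBsub hBcard i
    have hi2 := i.2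
    by_cases hik : (i : ℕ) < k
    · have hc : (2 * (i : ℤ) - (((2 * k : ℕ) : ℤ) - 1)) ≤ 0 := by push_cast; omega
      have hge : (g i : ℤ) ≤ (B.orderEmbOfFin hBcard i : ℤ) := by
        simp only [hg, if_pos hik]; push_cast; omega
      exact mul_le_mul_of_nonpos_left hge hc
    · have hc : 0 ≤ (2 * (i : ℤ) - (((2 * k : ℕ) : ℤ) - 1)) := by push_cast; omega
      have hge : (B.orderEmbOfFin hBcard i : ℤ) ≤ (g i : ℤ) := by
        simp only [hg, if_neg hik]
        have : B.orderEmbOfFin hBcard i ≤ n - 2 * k + 1 + (i : ℕ) := by omega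
        exact_mod_cast this
      exact mul_le_mul_of_nonneg_left hge hc
  have hlt : ∀ i : Fin (2 * k), B.orderEmbOfFin hBcard i ≠ g i →
      (2 * (i : ℤ) - (((2 * k : ℕ) : ℤ) - 1)) * (B.orderEmbOfFin hBcard i : ℤ)
        < (2 * (i : ℤ) - (((2 * k : ℕ) : ℤ) - 1)) * (g i : ℤ) := by
    intro i hne
    have hlb := lb_aux B hBsub hBcard i
    have hub := ub_aux B hBsub hBcard i
    have hi2 := i.2
    by_cases hik : (i : ℕ) < k
    · have hc : (2 * (i : ℤ) - (((2 * k : ℕ) : ℤ) - 1)) < 0 := by push_cast; omega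
      have hge : (g i : ℤ) < (B.orderEmbOfFin hBcard i : ℤ) := by
        have hgv : g i = (i : ℕ) + 1 := by simp only [hg, if_pos hik]
        have : g i ≤ B.orderEmbOfFin hBcard i := by omega
        have h2 : g i ≠ B.orderEmbOfFin hBcard i := fun h => hne h.symm
        exact_mod_cast lt_of_le_of_ne this h2
      exact mul_lt_mul_of_neg_left hge hc
    · have hc : 0 < (2 * (i : ℤ) - (((2 * k : ℕ) : ℤ) - 1)) := by push_cast; omega
      have hge : (B.orderEmbOfFin hBcard i : ℤ) < (g i : ℤ) := by
        have hgv : g i = n - 2 * k + 1 + (i : ℕ) := by simp only [hg, if_neg hik]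
        have : B.orderEmbOfFin hBcard i ≤ g i := by omega
        exact_mod_cast lt_of_le_of_ne this hne
      exact mul_lt_mul_of_pos_left hge hc
  constructor
  · rw [hWB, hWopt]
    exact Finset.sum_le_sum fun i _ => hle i
  · intro hneq
    have hfne : ¬ (∀ i : Fin (2 * k), B.orderEmbOfFin hBcard i = g i) := by
      intro hall
      apply hneq
      have hfun : (fun i => (B.orderEmbOfFin hBcard i : ℕ))
          = fun i => opt.orderEmbOfFin hoptcard i := by
        funext i; rw [hall i, hgu]
      have : Set.range (B.orderEmbOfFin hBcard) = Set.range (opt.orderEmbOfFin hoptcard) := by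
        rw [show ⇑(B.orderEmbOfFin hBcard) = fun i => (B.orderEmbOfFin hBcard i : ℕ) from rfl,
          hfun]
      rw [Finset.range_orderEmbOfFin, Finset.range_orderEmbOfFin] at this
      exact_mod_cast Finset.coe_inj.mp this
    push_neg at hfne
    obtain ⟨i0, hi0⟩ := hfne
    rw [hWB, hWopt]
    exact Finset.sum_lt_sum (fun i _ => hle i) ⟨i0, Finset.mem_univ i0, hlt i0 hi0⟩

/-- For even `m` with `2 ≤ m ≤ n`, a set `A` of `m` vertices of `P_n` maximizes the Wiener
index iff `A = {1,...,m/2} ∪ {n − m/2 + 1,...,n}`. -/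
theorem stmt_13 (n m : ℕ) (hm : 2 ≤ m) (hmn : m ≤ n) (hev : Even m)
    (A : Finset ℕ) (hA : A ⊆ Finset.Icc 1 n) (hcard : A.card = m) :
    (∀ B : Finset ℕ, B ⊆ Finset.Icc 1 n → B.card = m → Wpath B ≤ Wpath A) ↔
      A = Finset.Icc 1 (m / 2) ∪ Finset.Icc (n - m / 2 + 1) n := by
  obtain ⟨k, hk2⟩ := hev
  have hk1 : 1 ≤ k := by omega
  have hkd : m / 2 = k := by omega
  have hkn : 2 * k ≤ n := by omega
  rw [hkd]
  constructor
  · intro hmax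
    by_contra hne
    have h1 := (core n k hk1 hkn A hA (by omega)).2 hne
    have h2 := hmax (Finset.Icc 1 k ∪ Finset.Icc (n - k + 1) n)
      (opt_sub n k hk1 hkn) (by rw [opt_card n k hk1 hkn]; omega)
    exact absurd h2 (not_le.mpr h1)
  · intro hAeq B hB1 hB2
    rw [hAeq]
    exact (core n k hk1 hkn B hB1 (by omega)).1
end

section
/- Let m be odd with 2 ≤ m ≤ n. A set A of m vertices of P_n is a maximizer of the Wiener index W if and only if A = {1,...,(m−1)/2} ∪ {j} ∪ {n−(m−1)/2+1,...,n} for some integer j with (m−1)/2 < j < n−(m−1)/2+1. -/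
namespace Stmt14Aux

/-- number of elements of `A` below `a` -/
def blw (A : Finset ℕ) (a : ℕ) : ℕ := (A.filter (· < a)).card
/-- number of elements of `A` above `a` -/
def abv (A : Finset ℕ) (a : ℕ) : ℕ := (A.filter (a < ·)).card

lemma blw_add_abv {A : Finset ℕ} {a : ℕ} (ha : a ∈ A) :
    blw A a + abv A a + 1 = A.card := by
  classical
  have hd : Disjoint (A.filter (· < a)) (A.filter (a < ·)) := by
    rw [Finset.disjoint_left]
    intro x hx hx'
    rw [Finset.mem_filter] at hx hx'
    omega
  have hu : A.filter (· < a) ∪ A.filter (a < ·) = A.erase a := by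
    ext x
    simp only [Finset.mem_union, Finset.mem_filter, Finset.mem_erase]
    constructor
    · rintro (⟨h1, h2⟩ | ⟨h1, h2⟩) <;> exact ⟨by omega, h1⟩
    · rintro ⟨h1, h2⟩
      rcases lt_or_gt_of_ne h1 with h | h
      · exact Or.inl ⟨h2, h⟩
      · exact Or.inr ⟨h2, h⟩
  have hc := Finset.card_union_of_disjoint hd
  rw [hu, Finset.card_erase_of_mem ha] at hc
  have hpos : 0 < A.card := Finset.card_pos.mpr ⟨a, ha⟩
  unfold blw abv
  omega

lemma blw_lt_card {A : Finset ℕ} {a : ℕ} (ha : a ∈ A) : blw A a < A.card := by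
  have := blw_add_abv ha; omega

lemma blw_strictmono {A : Finset ℕ} {a b : ℕ} (ha : a ∈ A) (hab : a < b) :
    blw A a < blw A b := by
  apply Finset.card_lt_card
  have hsub : A.filter (· < a) ⊆ A.filter (· < b) := by
    intro x hx
    rw [Finset.mem_filter] at hx ⊢
    exact ⟨hx.1, by omega⟩
  rw [Finset.ssubset_iff_of_subset hsub]
  exact ⟨a, Finset.mem_filter.mpr ⟨ha, hab⟩, fun h => by
    have := (Finset.mem_filter.mp h).2; omega⟩

lemma blw_inj {A : Finset ℕ} : ∀ x ∈ A, ∀ y ∈ A, blw A x = blw A y → x = y := by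
  intro x hx y hy h
  rcases lt_trichotomy x y with h' | h' | h'
  · exact absurd h (Nat.ne_of_lt (blw_strictmono hx h'))
  · exact h'
  · exact absurd h.symm (Nat.ne_of_lt (blw_strictmono hy h'))

lemma blw_image (A : Finset ℕ) : A.image (blw A) = Finset.range A.card := by
  apply Finset.eq_of_subset_of_card_le
  · intro i hi
    obtain ⟨a, ha, rfl⟩ := Finset.mem_image.mp hi
    exact Finset.mem_range.mpr (blw_lt_card ha)
  · rw [Finset.card_range, Finset.card_image_of_injOn (fun x hx y hy h => blw_inj x hx y hy h)]

lemma sum_blw (A : Finset ℕ) (f : ℕ → ℤ) :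
    ∑ a ∈ A, f (blw A a) = ∑ i ∈ Finset.range A.card, f i := by
  rw [← blw_image, Finset.sum_image blw_inj]

lemma blw_ge {n : ℕ} {A : Finset ℕ} (hA : A ⊆ Finset.Icc 1 n) {a : ℕ} (ha : a ∈ A) :
    blw A a + 1 ≤ a := by
  have h1 : A.filter (· < a) ⊆ Finset.Icc 1 (a - 1) := by
    intro x hx
    rw [Finset.mem_filter] at hx
    have := Finset.mem_Icc.mp (hA hx.1)
    rw [Finset.mem_Icc]
    omega
  have h2 := Finset.card_le_card h1
  rw [Nat.card_Icc] at h2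
  have h3 := Finset.mem_Icc.mp (hA ha)
  unfold blw
  omega

lemma abv_le {n : ℕ} {A : Finset ℕ} (hA : A ⊆ Finset.Icc 1 n) {a : ℕ} (ha : a ∈ A) :
    a + abv A a ≤ n := by
  have h1 : A.filter (a < ·) ⊆ Finset.Icc (a + 1) n := by
    intro x hx
    rw [Finset.mem_filter] at hx
    have := Finset.mem_Icc.mp (hA hx.1)
    rw [Finset.mem_Icc]
    omega
  have h2 := Finset.card_le_card h1
  rw [Nat.card_Icc] at h2
  have h3 := Finset.mem_Icc.mp (hA ha)
  unfold abv
  omega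

lemma wpath_formula (A : Finset ℕ) :
    Wpath A = ∑ a ∈ A, (a : ℤ) * ((blw A a : ℤ) - (abv A a : ℤ)) := by
  classical
  have h1 : A.offDiag.filter (fun p => p.1 < p.2)
      = (A ×ˢ A).filter (fun p => p.1 < p.2) := by
    ext p
    simp only [Finset.mem_filter, Finset.mem_offDiag, Finset.mem_product]
    exact ⟨fun h => ⟨⟨h.1.1, h.1.2.1⟩, h.2⟩, fun h => ⟨⟨h.1.1, h.1.2, Nat.ne_of_lt h.2⟩, h.2⟩⟩
  rw [Wpath, h1, Finset.sum_filter, Finset.sum_product]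
  have key : ∀ u ∈ A, (∑ v ∈ A, if u < v then ((v : ℤ) - (u : ℤ)) else 0)
      = (∑ v ∈ A, if u < v then (v : ℤ) else 0) - (abv A u : ℤ) * u := by
    intro u _
    have hsplit : ∀ v ∈ A, (if u < v then ((v : ℤ) - (u : ℤ)) else 0)
        = (if u < v then (v : ℤ) else 0) - (if u < v then (u : ℤ) else 0) := by
      intro v _; split <;> ring
    rw [Finset.sum_congr rfl hsplit, Finset.sum_sub_distrib]
    congr 1
    rw [← Finset.sum_filter, Finset.sum_const, abv]
    push_cast [mul_comm]
    ring
  rw [Finset.sum_congr rfl key, Finset.sum_sub_distrib]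
  have h2 : (∑ u ∈ A, ∑ v ∈ A, if u < v then (v : ℤ) else 0)
      = ∑ v ∈ A, (blw A v : ℤ) * v := by
    rw [Finset.sum_comm]
    refine Finset.sum_congr rfl fun v _ => ?_
    rw [← Finset.sum_filter, Finset.sum_const, blw]
    push_cast [mul_comm]
    ring
  rw [h2, ← Finset.sum_sub_distrib]
  exact Finset.sum_congr rfl fun a _ => by ring

/-- upper bound for the term of an element with `i` elements of the set below it -/
def phi (n m i : ℕ) : ℤ :=
  if 2 * (i : ℤ) + 1 < m then ((i : ℤ) + 1) * (2 * i + 1 - m)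
  else ((n : ℤ) - m + 1 + i) * (2 * i + 1 - m)

lemma term_le {n m : ℕ} {A : Finset ℕ} (hA : A ⊆ Finset.Icc 1 n) (hm : A.card = m)
    {a : ℕ} (ha : a ∈ A) :
    (a : ℤ) * ((blw A a : ℤ) - (abv A a : ℤ)) ≤ phi n m (blw A a) := by
  have h0 := blw_add_abv ha
  have h1 := blw_ge hA ha
  have h2 := abv_le hA ha
  rw [hm] at h0
  have h0' : (blw A a : ℤ) + (abv A a : ℤ) + 1 = (m : ℤ) := by exact_mod_cast h0
  have h1' : (blw A a : ℤ) + 1 ≤ (a : ℤ) := by exact_mod_cast h1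
  have h2' : (a : ℤ) + (abv A a : ℤ) ≤ (n : ℤ) := by exact_mod_cast h2
  unfold phi
  split_ifs with h
  · nlinarith [mul_nonneg (by linarith : (0:ℤ) ≤ (a : ℤ) - ((blw A a : ℤ) + 1))
      (by linarith : (0:ℤ) ≤ (abv A a : ℤ) - (blw A a : ℤ))]
  · push_neg at h
    nlinarith [mul_nonneg (by linarith : (0:ℤ) ≤ (n : ℤ) - (abv A a : ℤ) - (a : ℤ))
      (by linarith : (0:ℤ) ≤ (blw A a : ℤ) - (abv A a : ℤ))]

lemma term_eq_lo {n m : ℕ} {A : Finset ℕ} (hm : A.card = m)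
    {a : ℕ} (ha : a ∈ A) (hbv : blw A a < abv A a)
    (he : (a : ℤ) * ((blw A a : ℤ) - (abv A a : ℤ)) = phi n m (blw A a)) :
    a = blw A a + 1 := by
  have h0 := blw_add_abv ha
  rw [hm] at h0
  have h0' : (blw A a : ℤ) + (abv A a : ℤ) + 1 = (m : ℤ) := by exact_mod_cast h0
  have hbv' : (blw A a : ℤ) < (abv A a : ℤ) := by exact_mod_cast hbv
  unfold phi at he
  rw [if_pos (by linarith : 2 * (blw A a : ℤ) + 1 < (m : ℤ))] at he
  have hco : (2 * (blw A a : ℤ) + 1 - (m : ℤ)) = (blw A a : ℤ) - (abv A a : ℤ) := by linarith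
  rw [hco] at he
  have hc : ((blw A a : ℤ) - (abv A a : ℤ)) ≠ 0 := by intro h; omega
  have := mul_right_cancel₀ hc he
  exact_mod_cast this

lemma term_eq_hi {n m : ℕ} {A : Finset ℕ} (hm : A.card = m)
    {a : ℕ} (ha : a ∈ A) (hbv : abv A a < blw A a)
    (he : (a : ℤ) * ((blw A a : ℤ) - (abv A a : ℤ)) = phi n m (blw A a)) :
    (a : ℤ) = (n : ℤ) - (abv A a : ℤ) := by
  have h0 := blw_add_abv ha
  rw [hm] at h0
  have h0' : (blw A a : ℤ) + (abv A a : ℤ) + 1 = (m : ℤ) := by exact_mod_cast h0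
  have hbv' : (abv A a : ℤ) < (blw A a : ℤ) := by exact_mod_cast hbv
  unfold phi at he
  rw [if_neg (by push_neg; linarith : ¬ (2 * (blw A a : ℤ) + 1 < (m : ℤ)))] at he
  have hco : (2 * (blw A a : ℤ) + 1 - (m : ℤ)) = (blw A a : ℤ) - (abv A a : ℤ) := by linarith
  rw [hco] at he
  have hc : ((blw A a : ℤ) - (abv A a : ℤ)) ≠ 0 := by intro h; omega
  have := mul_right_cancel₀ hc he
  linarith

lemma W_le {n m : ℕ} (B : Finset ℕ) (hB : B ⊆ Finset.Icc 1 n) (hc : B.card = m) :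
    Wpath B ≤ ∑ i ∈ Finset.range m, phi n m i := by
  rw [wpath_formula]
  calc ∑ a ∈ B, (a : ℤ) * ((blw B a : ℤ) - (abv B a : ℤ))
      ≤ ∑ a ∈ B, phi n m (blw B a) := Finset.sum_le_sum fun a ha => term_le hB hc ha
    _ = ∑ i ∈ Finset.range m, phi n m i := by rw [sum_blw, hc]

lemma S_mem {n k j x : ℕ} :
    x ∈ Finset.Icc 1 k ∪ {j} ∪ Finset.Icc (n - k + 1) n ↔
      (1 ≤ x ∧ x ≤ k) ∨ x = j ∨ (n - k + 1 ≤ x ∧ x ≤ n) := by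
  simp only [Finset.mem_union, Finset.mem_Icc, Finset.mem_singleton, or_assoc]

lemma S_sub {n k j : ℕ} (hk : 1 ≤ k) (hj1 : k < j) (hj2 : j < n - k + 1) :
    Finset.Icc 1 k ∪ {j} ∪ Finset.Icc (n - k + 1) n ⊆ Finset.Icc 1 n := by
  intro x hx
  rw [S_mem] at hx
  rw [Finset.mem_Icc]
  omega

lemma S_card {n k j : ℕ} (hn : 2 * k + 1 ≤ n) (hk : 1 ≤ k) (hj1 : k < j)
    (hj2 : j < n - k + 1) :
    (Finset.Icc 1 k ∪ {j} ∪ Finset.Icc (n - k + 1) n).card = 2 * k + 1 := by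
  have hd1 : Disjoint (Finset.Icc 1 k) ({j} : Finset ℕ) := by
    rw [Finset.disjoint_left]
    intro x hx hx'
    rw [Finset.mem_Icc] at hx
    rw [Finset.mem_singleton] at hx'
    omega
  have hd2 : Disjoint (Finset.Icc 1 k ∪ {j}) (Finset.Icc (n - k + 1) n) := by
    rw [Finset.disjoint_left]
    intro x hx hx'
    simp only [Finset.mem_union, Finset.mem_Icc, Finset.mem_singleton] at hx
    rw [Finset.mem_Icc] at hx'
    omega
  rw [Finset.card_union_of_disjoint hd2, Finset.card_union_of_disjoint hd1,
      Nat.card_Icc, Nat.card_Icc, Finset.card_singleton]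
  omega

lemma S_W {n k j : ℕ} (hn : 2 * k + 1 ≤ n) (hk : 1 ≤ k) (hj1 : k < j) (hj2 : j < n - k + 1) :
    Wpath (Finset.Icc 1 k ∪ {j} ∪ Finset.Icc (n - k + 1) n)
      = ∑ i ∈ Finset.range (2 * k + 1), phi n (2 * k + 1) i := by
  set S := Finset.Icc 1 k ∪ {j} ∪ Finset.Icc (n - k + 1) n with hS
  have hcard : S.card = 2 * k + 1 := S_card hn hk hj1 hj2
  have hrng : ∑ i ∈ Finset.range (2 * k + 1), phi n (2 * k + 1) i
      = ∑ a ∈ S, phi n (2 * k + 1) (blw S a) := by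
    rw [sum_blw, hcard]
  rw [wpath_formula, hrng]
  refine Finset.sum_congr rfl fun a ha => ?_
  have haS := ha
  rw [hS, S_mem] at ha
  have h0 := blw_add_abv haS
  rw [hcard] at h0
  rcases ha with ⟨h1, h2⟩ | rfl | ⟨h1, h2⟩
  · have hb : blw S a = a - 1 := by
      have hfe : S.filter (· < a) = Finset.Icc 1 (a - 1) := by
        ext x
        simp only [hS, Finset.mem_filter, Finset.mem_union, Finset.mem_Icc,
          Finset.mem_singleton]
        omega
      rw [blw, hfe, Nat.card_Icc]; omega
    have hB : (blw S a : ℤ) = (a : ℤ) - 1 := by omega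
    have hV : (abv S a : ℤ) = 2 * (k : ℤ) + 1 - a := by omega
    rw [phi, hB, hV, if_pos (by push_cast; omega)]
    push_cast
    ring
  · have hb : blw S a = k := by
      have hfe : S.filter (· < a) = Finset.Icc 1 k := by
        ext x
        simp only [hS, Finset.mem_filter, Finset.mem_union, Finset.mem_Icc,
          Finset.mem_singleton]
        omega
      rw [blw, hfe, Nat.card_Icc]; omega
    have hB : (blw S a : ℤ) = (k : ℤ) := by omega
    have hV : (abv S a : ℤ) = (k : ℤ) := by omega
    rw [phi, hB, hV, if_neg (by push_cast; omega)]
    push_cast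
    ring
  · have hb : abv S a = n - a := by
      have hfe : S.filter (a < ·) = Finset.Icc (a + 1) n := by
        ext x
        simp only [hS, Finset.mem_filter, Finset.mem_union, Finset.mem_Icc,
          Finset.mem_singleton]
        omega
      rw [abv, hfe, Nat.card_Icc]; omega
    have hV : (abv S a : ℤ) = (n : ℤ) - a := by omega
    have hB : (blw S a : ℤ) = (a : ℤ) + 2 * k - n := by omega
    rw [phi, hB, hV, if_neg (by push_cast; omega)]
    push_cast
    ring

end Stmt14Aux

open Stmt14Aux in
/-- For odd `m` with `2 ≤ m ≤ n`, a set `A` of `m` vertices of `P_n` maximizes the Wiener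
index iff `A = {1,...,(m−1)/2} ∪ {j} ∪ {n−(m−1)/2+1,...,n}` for some
`(m−1)/2 < j < n−(m−1)/2+1`. -/
theorem stmt_14 (n m : ℕ) (hm : 2 ≤ m) (hmn : m ≤ n) (hodd : Odd m)
    (A : Finset ℕ) (hA : A ⊆ Finset.Icc 1 n) (hcard : A.card = m) :
    (∀ B : Finset ℕ, B ⊆ Finset.Icc 1 n → B.card = m → Wpath B ≤ Wpath A) ↔
      ∃ j : ℕ, (m - 1) / 2 < j ∧ j < n - (m - 1) / 2 + 1 ∧
        A = Finset.Icc 1 ((m - 1) / 2) ∪ {j} ∪ Finset.Icc (n - (m - 1) / 2 + 1) n := by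
  classical
  obtain ⟨k, hk⟩ := hodd
  have hk' : m = 2 * k + 1 := by omega
  have hk1 : 1 ≤ k := by omega
  have hk2 : (m - 1) / 2 = k := by omega
  have hn : 2 * k + 1 ≤ n := by omega
  rw [hk2]
  have hmax_eq : ∑ i ∈ Finset.range m, phi n m i
      = Wpath (Finset.Icc 1 k ∪ {k + 1} ∪ Finset.Icc (n - k + 1) n) := by
    rw [S_W hn hk1 (by omega) (by omega), hk']
  constructor
  · intro hmaxr
    have hWA_le : Wpath A ≤ ∑ i ∈ Finset.range m, phi n m i := W_le A hA hcard
    have hWA_ge : ∑ i ∈ Finset.range m, phi n m i ≤ Wpath A := by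
      rw [hmax_eq]
      exact hmaxr _ (S_sub hk1 (by omega) (by omega))
        (by rw [S_card hn hk1 (by omega) (by omega)]; omega)
    have hWA : Wpath A = ∑ i ∈ Finset.range m, phi n m i := le_antisymm hWA_le hWA_ge
    have hsum : ∑ a ∈ A, (a : ℤ) * ((blw A a : ℤ) - (abv A a : ℤ))
        = ∑ a ∈ A, phi n m (blw A a) := by
      rw [← wpath_formula, hWA, sum_blw, hcard]
    have heach : ∀ a ∈ A, (a : ℤ) * ((blw A a : ℤ) - (abv A a : ℤ)) = phi n m (blw A a) :=
      (Finset.sum_eq_sum_iff_of_le fun a ha => term_le hA hcard ha).mp hsum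
    have hsurj : ∀ i, i < m → ∃ a ∈ A, blw A a = i := by
      intro i hi
      have : i ∈ A.image (blw A) := by
        rw [blw_image, hcard]; exact Finset.mem_range.mpr hi
      exact Finset.mem_image.mp this
    have hbot : ∀ x, 1 ≤ x → x ≤ k → x ∈ A := by
      intro x hx1 hx2
      obtain ⟨a, ha, hba⟩ := hsurj (x - 1) (by omega)
      have hav := blw_add_abv ha
      rw [hcard] at hav
      have hlt : blw A a < abv A a := by omega
      have hax := term_eq_lo hcard ha hlt (heach a ha)
      have : a = x := by omega
      rwa [this] at ha
    have htop : ∀ x, n - k + 1 ≤ x → x ≤ n → x ∈ A := by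
      intro x hx1 hx2
      obtain ⟨a, ha, hba⟩ := hsurj (m - 1 - (n - x)) (by omega)
      have hav := blw_add_abv ha
      rw [hcard] at hav
      have hlt : abv A a < blw A a := by omega
      have hax := term_eq_hi hcard ha hlt (heach a ha)
      have : a = x := by omega
      rwa [this] at ha
    obtain ⟨j, hjA, hjb⟩ := hsurj k (by omega)
    have hjav := blw_add_abv hjA
    rw [hcard] at hjav
    have hj1 : k < j := by have := blw_ge hA hjA; omega
    have hj2 : j < n - k + 1 := by have := abv_le hA hjA; omega
    refine ⟨j, hj1, hj2, ?_⟩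
    have hsub : Finset.Icc 1 k ∪ {j} ∪ Finset.Icc (n - k + 1) n ⊆ A := by
      intro x hx
      rw [S_mem] at hx
      rcases hx with ⟨h1, h2⟩ | rfl | ⟨h1, h2⟩
      · exact hbot x h1 h2
      · exact hjA
      · exact htop x h1 h2
    have hcle : A.card ≤ (Finset.Icc 1 k ∪ {j} ∪ Finset.Icc (n - k + 1) n).card := by
      rw [hcard, S_card hn hk1 hj1 hj2]; omega
    exact (Finset.eq_of_subset_of_card_le hsub hcle).symm
  · rintro ⟨j, hj1, hj2, rfl⟩ B hB hBc
    calc Wpath B ≤ ∑ i ∈ Finset.range m, phi n m i := W_le B hB hBc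
      _ = _ := by rw [hk', S_W hn hk1 hj1 hj2]
end

section
/- In the path P_n, every local maximizer of the Wiener index W is a global maximizer: if A ⊆ {1,...,n} with |A| ≥ 2 satisfies W(A) ≥ W(B) for every B obtained from A by replacing one element u ∈ A by an adjacent vertex v ∉ A (|u−v| = 1), then W(A) ≥ W(C) for all C ⊆ {1,...,n} with |C| = |A|. -/
open Finset

def cnt (A : Finset ℕ) (i : ℕ) : ℤ := ((A.filter (fun x => x ≤ i)).card : ℤ)

lemma cnt_mono (A : Finset ℕ) {j i : ℕ} (h : j ≤ i) : cnt A j ≤ cnt A i := by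
  unfold cnt
  have hsub : A.filter (fun x => x ≤ j) ⊆ A.filter (fun x => x ≤ i) := by
    intro x hx
    simp only [Finset.mem_filter] at hx ⊢
    exact ⟨hx.1, hx.2.trans h⟩
  exact_mod_cast Finset.card_le_card hsub

lemma cnt_nonneg (A : Finset ℕ) (i : ℕ) : 0 ≤ cnt A i := Int.ofNat_nonneg _

lemma cnt_le_card (A : Finset ℕ) (i : ℕ) : cnt A i ≤ (A.card : ℤ) := by
  unfold cnt; exact_mod_cast Finset.card_le_card (Finset.filter_subset _ _)

lemma Wpath_eq_sum (n : ℕ) (A : Finset ℕ) (hA : A ⊆ Finset.Icc 1 n) :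
    Wpath A = ∑ i ∈ Finset.Ico 1 n, cnt A i * ((A.card : ℤ) - cnt A i) := by
  unfold Wpath
  have key : ∀ p ∈ A.offDiag.filter (fun p => p.1 < p.2),
      ((p.2 : ℤ) - (p.1 : ℤ)) = ∑ i ∈ Finset.Ico 1 n, (if p.1 ≤ i ∧ i < p.2 then (1:ℤ) else 0) := by
    intro p hp
    simp only [mem_filter, mem_offDiag] at hp
    obtain ⟨⟨h1, h2, _⟩, hlt⟩ := hp
    have hu := hA h1; have hv := hA h2
    simp only [Finset.mem_Icc] at hu hv
    rw [Finset.sum_boole]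
    have : (Finset.Ico 1 n).filter (fun i => p.1 ≤ i ∧ i < p.2) = Finset.Ico p.1 p.2 := by
      ext x; simp only [mem_filter, mem_Ico]; omega
    rw [this, Nat.card_Ico]
    push_cast
    omega
  rw [Finset.sum_congr rfl key, Finset.sum_comm]
  refine Finset.sum_congr rfl (fun i _ => ?_)
  rw [Finset.sum_boole]
  have hset : (A.offDiag.filter (fun p => p.1 < p.2)).filter (fun p => p.1 ≤ i ∧ i < p.2)
      = (A.filter (fun x => x ≤ i)) ×ˢ (A.filter (fun x => i < x)) := by
    ext ⟨u, v⟩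
    simp only [mem_filter, mem_offDiag, mem_product]
    constructor
    · rintro ⟨⟨⟨hu, hv, _⟩, _⟩, h3, h4⟩; exact ⟨⟨hu, h3⟩, hv, h4⟩
    · rintro ⟨⟨hu, h3⟩, hv, h4⟩; exact ⟨⟨⟨hu, hv, by omega⟩, by omega⟩, h3, h4⟩
  rw [hset, Finset.card_product]
  have hsplit : (A.filter (fun x => x ≤ i)).card + (A.filter (fun x => i < x)).card = A.card := by
    have h0 := Finset.card_filter_add_card_filter_not (s := A) (p := fun x => x ≤ i)
    have h1 : A.filter (fun x => ¬ x ≤ i) = A.filter (fun x => i < x) := by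
      ext x; simp [not_le]
    rw [h1] at h0
    exact h0
  have hs : ((A.filter (fun x => x ≤ i)).card : ℤ) + ((A.filter (fun x => i < x)).card : ℤ) = (A.card : ℤ) := by
    exact_mod_cast hsplit
  unfold cnt
  push_cast
  nlinarith [hs]

lemma cnt_perturb (A : Finset ℕ) (u v i : ℕ) (hu : u ∈ A) (hv : v ∉ A) :
    cnt (insert v (A.erase u)) i
      = cnt A i + (if v ≤ i then 1 else 0) - (if u ≤ i then 1 else 0) := by
  unfold cnt
  rw [Finset.filter_insert, Finset.filter_erase]
  by_cases hvi : v ≤ i <;> by_cases hui : u ≤ i <;>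
    simp only [hvi, hui, if_true, if_false]
  · have hvm : v ∉ (A.filter (fun x => x ≤ i)).erase u := by
      simp [Finset.mem_erase, Finset.mem_filter, hv]
    rw [Finset.card_insert_of_notMem hvm, Finset.card_erase_of_mem (by simp [Finset.mem_filter, hu, hui])]
    have hpos : 0 < (A.filter (fun x => x ≤ i)).card :=
      Finset.card_pos.2 ⟨u, by simp [Finset.mem_filter, hu, hui]⟩
    push_cast [Nat.sub_add_cancel hpos]
    ring
  · have hvm : v ∉ (A.filter (fun x => x ≤ i)).erase u := by
      simp [Finset.mem_erase, Finset.mem_filter, hv]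
    rw [Finset.card_insert_of_notMem hvm,
      Finset.erase_eq_of_notMem (by simp [Finset.mem_filter, hui])]
    push_cast; ring
  · rw [Finset.card_erase_of_mem (by simp [Finset.mem_filter, hu, hui])]
    have hpos : 0 < (A.filter (fun x => x ≤ i)).card :=
      Finset.card_pos.2 ⟨u, by simp [Finset.mem_filter, hu, hui]⟩
    push_cast [Nat.cast_sub hpos]
    ring
  · rw [Finset.erase_eq_of_notMem (by simp [Finset.mem_filter, hui])]
    push_cast; ring

lemma Wpath_perturb_diff (n : ℕ) (A : Finset ℕ) (hA : A ⊆ Finset.Icc 1 n)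
    (u v : ℕ) (hu : u ∈ A) (hv : v ∉ A) (hvI : v ∈ Finset.Icc 1 n)
    (j : ℕ) (hj : j ∈ Finset.Ico 1 n)
    (hsame : ∀ i ∈ Finset.Ico 1 n, i ≠ j →
      ((if v ≤ i then (1:ℤ) else 0) - (if u ≤ i then 1 else 0)) = 0) :
    Wpath (insert v (A.erase u)) - Wpath A
      = (cnt (insert v (A.erase u)) j) * ((A.card : ℤ) - cnt (insert v (A.erase u)) j)
        - cnt A j * ((A.card : ℤ) - cnt A j) := by
  set B := insert v (A.erase u) with hB
  have hBsub : B ⊆ Finset.Icc 1 n := by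
    intro x hx
    rw [hB, Finset.mem_insert] at hx
    rcases hx with rfl | hx
    · exact hvI
    · exact hA (Finset.erase_subset _ _ hx)
  have hBcard : B.card = A.card := by
    rw [hB, Finset.card_insert_of_notMem (fun h => hv (Finset.erase_subset _ _ h)),
      Finset.card_erase_of_mem hu]
    have : 0 < A.card := Finset.card_pos.2 ⟨u, hu⟩
    omega
  rw [Wpath_eq_sum n A hA, Wpath_eq_sum n B hBsub, hBcard, ← Finset.sum_sub_distrib]
  rw [Finset.sum_eq_single_of_mem j hj]
  intro i hi hne
  have hci : cnt B i = cnt A i := by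
    rw [hB, cnt_perturb A u v i hu hv]
    have := hsame i hi hne
    omega
  rw [hci]; ring

lemma locP1 (n : ℕ) (A : Finset ℕ) (hA : A ⊆ Finset.Icc 1 n)
    (hloc : ∀ u ∈ A, ∀ v ∈ Finset.Icc 1 n, v ∉ A → (v = u + 1 ∨ u = v + 1) →
      Wpath (insert v (A.erase u)) ≤ Wpath A)
    (v : ℕ) (hvI : v ∈ Finset.Icc 1 n) (hv : v ∉ A) (hv1 : v + 1 ∈ A) :
    (A.card : ℤ) - 1 ≤ 2 * cnt A v := by
  have hd := Wpath_perturb_diff n A hA (v+1) v hv1 hv hvI v ?_ ?_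
  · have hle := hloc (v+1) hv1 v hvI hv (Or.inr rfl)
    have hcnt : cnt (insert v (A.erase (v+1))) v = cnt A v + 1 := by
      rw [cnt_perturb A (v+1) v v hv1 hv]
      simp
    rw [hcnt] at hd
    nlinarith [hd, hle]
  · have h1 : 1 ≤ v := (Finset.mem_Icc.1 hvI).1
    have h2 : v + 1 ≤ n := (Finset.mem_Icc.1 (hA hv1)).2
    exact Finset.mem_Ico.2 ⟨h1, by omega⟩
  · intro i _ hne
    have : ¬ (v ≤ i ∧ ¬ v + 1 ≤ i) := by omega
    by_cases h : v ≤ i <;> by_cases h' : v + 1 ≤ i <;> simp [h, h'] <;> omega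

lemma locP2 (n : ℕ) (A : Finset ℕ) (hA : A ⊆ Finset.Icc 1 n)
    (hloc : ∀ u ∈ A, ∀ v ∈ Finset.Icc 1 n, v ∉ A → (v = u + 1 ∨ u = v + 1) →
      Wpath (insert v (A.erase u)) ≤ Wpath A)
    (u : ℕ) (hu : u ∈ A) (hu1 : u + 1 ∉ A) (hun : u + 1 ≤ n) :
    2 * cnt A u ≤ (A.card : ℤ) + 1 := by
  have h1 : 1 ≤ u := (Finset.mem_Icc.1 (hA hu)).1
  have hvI : u + 1 ∈ Finset.Icc 1 n := Finset.mem_Icc.2 ⟨by omega, hun⟩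
  have hd := Wpath_perturb_diff n A hA u (u+1) hu hu1 hvI u ?_ ?_
  · have hle := hloc u hu (u+1) hvI hu1 (Or.inl rfl)
    have hcnt : cnt (insert (u+1) (A.erase u)) u = cnt A u - 1 := by
      rw [cnt_perturb A u (u+1) u hu hu1]
      simp
    rw [hcnt] at hd
    nlinarith [hd, hle]
  · exact Finset.mem_Ico.2 ⟨h1, by omega⟩
  · intro i _ hne
    by_cases h : u ≤ i <;> by_cases h' : u + 1 ≤ i <;> simp [h, h'] <;> omega

lemma cnt_compl (A : Finset ℕ) (i : ℕ) :
    ((A.filter (fun x => i < x)).card : ℤ) = (A.card : ℤ) - cnt A i := by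
  have h0 := Finset.card_filter_add_card_filter_not (s := A) (p := fun x => x ≤ i)
  have h1 : A.filter (fun x => ¬ x ≤ i) = A.filter (fun x => i < x) := by
    ext x; simp [not_le]
  rw [h1] at h0
  unfold cnt
  omega

lemma gap_lemma (n : ℕ) (A : Finset ℕ) (hA : A ⊆ Finset.Icc 1 n)
    (P1 : ∀ v, v ∈ Finset.Icc 1 n → v ∉ A → v + 1 ∈ A → (A.card : ℤ) - 1 ≤ 2 * cnt A v)
    (P2 : ∀ u, u ∈ A → u + 1 ∉ A → u + 1 ≤ n → 2 * cnt A u ≤ (A.card : ℤ) + 1)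
    (j : ℕ) (hj : j ∈ Finset.Icc 1 n) (hjA : j ∉ A) :
    (A.card : ℤ) - 1 ≤ 2 * cnt A j ∧ 2 * cnt A j ≤ (A.card : ℤ) + 1 := by
  obtain ⟨hj1, hjn⟩ := Finset.mem_Icc.1 hj
  constructor
  · -- lower bound
    by_cases hS : (A.filter (fun x => j < x)).Nonempty
    · obtain ⟨y, hymem, hymin⟩ := Finset.exists_min_image (A.filter (fun x => j < x)) id hS
      obtain ⟨hyA, hjy⟩ := Finset.mem_filter.1 hymem
      have hymin' : ∀ x ∈ A, j < x → y ≤ x := fun x hx hjx =>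
        hymin x (Finset.mem_filter.2 ⟨hx, hjx⟩)
      have hvA : y - 1 ∉ A := by
        intro h
        rcases Nat.lt_or_ge j (y-1) with h' | h'
        · have := hymin' (y-1) h h'; omega
        · have heq : y - 1 = j := by omega
          rw [heq] at h; exact hjA h
      have hvI : y - 1 ∈ Finset.Icc 1 n := by
        have := (Finset.mem_Icc.1 (hA hyA)).2
        exact Finset.mem_Icc.2 ⟨by omega, by omega⟩
      have hy1 : y - 1 + 1 ∈ A := by
        have heq : y - 1 + 1 = y := by omega
        rw [heq]; exact hyA
      have h := P1 (y-1) hvI hvA hy1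
      have hseteq : A.filter (fun x => x ≤ y - 1) = A.filter (fun x => x ≤ j) := by
        ext t
        simp only [Finset.mem_filter]
        constructor
        · rintro ⟨ht, hle⟩
          refine ⟨ht, ?_⟩
          by_contra hc
          have := hymin' t ht (by omega)
          omega
        · rintro ⟨ht, hle⟩; exact ⟨ht, by omega⟩
      have heq : cnt A (y-1) = cnt A j := by unfold cnt; rw [hseteq]
      omega
    · have h1 : A.filter (fun x => x ≤ j) = A := by
        apply Finset.filter_true_of_mem
        intro x hx
        by_contra h
        exact hS ⟨x, Finset.mem_filter.2 ⟨hx, by omega⟩⟩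
      have h2 : cnt A j = (A.card : ℤ) := by unfold cnt; rw [h1]
      have hk : (0:ℤ) ≤ A.card := Int.ofNat_nonneg _
      omega
  · -- upper bound
    by_cases hS : (A.filter (fun x => x < j)).Nonempty
    · obtain ⟨m, hmmem, hmmax⟩ := Finset.exists_max_image (A.filter (fun x => x < j)) id hS
      obtain ⟨hmA, hmj⟩ := Finset.mem_filter.1 hmmem
      have hmmax' : ∀ t ∈ A, t < j → t ≤ m := fun t ht htj =>
        hmmax t (Finset.mem_filter.2 ⟨ht, htj⟩)
      have hm1A : m + 1 ∉ A := by
        intro h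
        rcases Nat.lt_or_ge (m+1) j with h' | h'
        · have := hmmax' (m+1) h h'; omega
        · have heq : m + 1 = j := by omega
          rw [heq] at h; exact hjA h
      have h := P2 m hmA hm1A (by omega)
      have hseteq : A.filter (fun x => x ≤ m) = A.filter (fun x => x ≤ j) := by
        ext t
        simp only [Finset.mem_filter]
        constructor
        · rintro ⟨ht, hle⟩; exact ⟨ht, by omega⟩
        · rintro ⟨ht, hle⟩
          refine ⟨ht, ?_⟩
          rcases Nat.lt_or_ge t j with h' | h'
          · exact hmmax' t ht h'
          · have heq : t = j := by omega
            rw [heq] at ht; exact absurd ht hjA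
      have heq : cnt A m = cnt A j := by unfold cnt; rw [hseteq]
      omega
    · have h1 : A.filter (fun t => t ≤ j) = ∅ := by
        rw [Finset.filter_eq_empty_iff]
        intro t ht hle
        rcases Nat.lt_or_ge t j with h' | h'
        · exact hS ⟨t, Finset.mem_filter.2 ⟨ht, h'⟩⟩
        · have heq : t = j := by omega
          rw [heq] at ht; exact hjA ht
      have h2 : cnt A j = 0 := by unfold cnt; rw [h1]; simp
      have hk : (0:ℤ) ≤ A.card := Int.ofNat_nonneg _
      omega

lemma pointwise (n : ℕ) (A C : Finset ℕ) (hA : A ⊆ Finset.Icc 1 n) (hC : C ⊆ Finset.Icc 1 n)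
    (hcard : C.card = A.card)
    (G : ∀ j, j ∈ Finset.Icc 1 n → j ∉ A →
      (A.card : ℤ) - 1 ≤ 2 * cnt A j ∧ 2 * cnt A j ≤ (A.card : ℤ) + 1)
    (i : ℕ) (hi : i ∈ Finset.Ico 1 n) :
    cnt C i * ((A.card : ℤ) - cnt C i) ≤ cnt A i * ((A.card : ℤ) - cnt A i) := by
  obtain ⟨hi1, hin⟩ := Finset.mem_Ico.1 hi
  set k : ℤ := (A.card : ℤ) with hk
  set a : ℤ := cnt A i with ha
  set c : ℤ := cnt C i with hc
  by_cases hcase : 2*a < k-1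
  · -- a small: initial segment full
    have hfull : ∀ j, 1 ≤ j → j ≤ i → j ∈ A := by
      intro j h1 h2
      by_contra hjA
      have hG := (G j (Finset.mem_Icc.2 ⟨h1, by omega⟩) hjA).1
      have := cnt_mono A h2
      omega
    have hAi : A.filter (fun x => x ≤ i) = Finset.Icc 1 i := by
      ext t
      simp only [Finset.mem_filter, Finset.mem_Icc]
      constructor
      · rintro ⟨ht, hle⟩; exact ⟨(Finset.mem_Icc.1 (hA ht)).1, hle⟩
      · rintro ⟨h1, h2⟩; exact ⟨hfull t h1 h2, h2⟩
    have hai : a = (i : ℤ) := by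
      rw [ha]; unfold cnt; rw [hAi, Nat.card_Icc]; push_cast; omega
    have hci : c ≤ (i : ℤ) := by
      rw [hc]; unfold cnt
      have hsub : C.filter (fun x => x ≤ i) ⊆ Finset.Icc 1 i := by
        intro t ht
        obtain ⟨ht, hle⟩ := Finset.mem_filter.1 ht
        exact Finset.mem_Icc.2 ⟨(Finset.mem_Icc.1 (hC ht)).1, hle⟩
      have := Finset.card_le_card hsub
      rw [Nat.card_Icc] at this
      push_cast
      omega
    have hca : c ≤ a := by omega
    have key : (0:ℤ) ≤ (a - c) * (k - a - c) := mul_nonneg (by omega) (by omega)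
    nlinarith [key]
  by_cases hcase2 : 2*a ≤ k+1
  · -- middle: equal contributions bounded
    rcases lt_trichotomy c a with h | h | h
    · have key : (0:ℤ) ≤ (a - c) * (k - a - c) := mul_nonneg (by omega) (by omega)
      nlinarith [key]
    · rw [h]
    · have key : (0:ℤ) ≤ (c - a) * (a + c - k) := mul_nonneg (by omega) (by omega)
      nlinarith [key]
  · rcases lt_trichotomy c a with h | h | h
    · -- impossible: tail full forces c ≥ a
      exfalso
      have hfull : ∀ j, i < j → j ≤ n → j ∈ A := by
        intro j h1 h2
        by_contra hjA
        have hG := (G j (Finset.mem_Icc.2 ⟨by omega, h2⟩) hjA).2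
        have := cnt_mono A (le_of_lt h1)
        omega
      have hAi : A.filter (fun x => i < x) = Finset.Icc (i+1) n := by
        ext t
        simp only [Finset.mem_filter, Finset.mem_Icc]
        constructor
        · rintro ⟨ht, hlt⟩; exact ⟨by omega, (Finset.mem_Icc.1 (hA ht)).2⟩
        · rintro ⟨h1, h2⟩; exact ⟨hfull t (by omega) h2, by omega⟩
      have h1 := cnt_compl A i
      have h2 := cnt_compl C i
      rw [hAi, Nat.card_Icc] at h1
      have hsub : C.filter (fun x => i < x) ⊆ Finset.Icc (i+1) n := by
        intro t ht
        obtain ⟨ht, hlt⟩ := Finset.mem_filter.1 ht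
        exact Finset.mem_Icc.2 ⟨by omega, (Finset.mem_Icc.1 (hC ht)).2⟩
      have h3 := Finset.card_le_card hsub
      rw [Nat.card_Icc] at h3
      have h4 : ((C.filter (fun x => i < x)).card : ℤ) ≤ ((n + 1 - (i+1) : ℕ) : ℤ) := by
        exact_mod_cast h3
      rw [hcard] at h2
      omega
    · rw [h]
    · have key : (0:ℤ) ≤ (c - a) * (a + c - k) := mul_nonneg (by omega) (by omega)
      nlinarith [key]


/-- In the path `P_n`, every local maximizer of the Wiener index is a global maximizer. -/
theorem stmt_15 (n : ℕ) (A : Finset ℕ) (hA : A ⊆ Finset.Icc 1 n) (hcard : 2 ≤ A.card)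
    (hloc : ∀ u ∈ A, ∀ v ∈ Finset.Icc 1 n, v ∉ A → (v = u + 1 ∨ u = v + 1) →
      Wpath (insert v (A.erase u)) ≤ Wpath A) :
    ∀ C : Finset ℕ, C ⊆ Finset.Icc 1 n → C.card = A.card → Wpath C ≤ Wpath A := by
  intro C hC hCcard
  have P1 : ∀ v, v ∈ Finset.Icc 1 n → v ∉ A → v + 1 ∈ A → (A.card : ℤ) - 1 ≤ 2 * cnt A v :=
    fun v hvI hv hv1 => locP1 n A hA hloc v hvI hv hv1
  have P2 : ∀ u, u ∈ A → u + 1 ∉ A → u + 1 ≤ n → 2 * cnt A u ≤ (A.card : ℤ) + 1 :=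
    fun u hu hu1 hun => locP2 n A hA hloc u hu hu1 hun
  have G := fun j hj hjA => gap_lemma n A hA P1 P2 j hj hjA
  rw [Wpath_eq_sum n A hA, Wpath_eq_sum n C hC, hCcard]
  exact Finset.sum_le_sum (fun i hi => pointwise n A C hA hC hCcard G i hi)
end

section
/- Let A be a set of m vertices in the cycle C_n with 2 ≤ m ≤ n, m odd (or n even and m arbitrary). Then A is a maximizer of the Wiener index W on C_n if and only if A is balanced, i.e., for every partition of ℤ/nℤ into two arcs whose sizes differ by at most one, the numbers of elements of A in the two arcs differ by at most one. -/
/-- Geodesic distance in the cycle `C_n` on vertex set `ℤ/nℤ`. -/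
def cycleDist (n : ℕ) (u v : ZMod n) [NeZero n] : ℕ :=
  min (v - u).val (n - (v - u).val)

/-- The Wiener index of a set of vertices of `C_n`: the sum of geodesic distances over
unordered pairs of distinct vertices. -/
def Wcyc (n : ℕ) [NeZero n] (A : Finset (ZMod n)) : ℕ :=
  (∑ p ∈ A.offDiag, cycleDist n p.1 p.2) / 2

/-- `P` is an arc (a connected set of vertices) of `C_n`. -/
def IsArc (n : ℕ) (P : Finset (ZMod n)) : Prop :=
  ∃ (a : ZMod n) (k : ℕ), P = (Finset.range k).image (fun i : ℕ => a + (i : ZMod n))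

/-- `{P, Q}` is an equitable 2-partition of `ℤ/nℤ` with connected blocks. -/
def IsEquitableArcPartition (n : ℕ) [NeZero n] (P Q : Finset (ZMod n)) : Prop :=
  P ∪ Q = Finset.univ ∧ Disjoint P Q ∧ IsArc n P ∧ IsArc n Q ∧
    |(P.card : ℤ) - (Q.card : ℤ)| ≤ 1

/-- `A` is balanced in `C_n`. -/
def IsBalanced (n : ℕ) [NeZero n] (A : Finset (ZMod n)) : Prop :=
  ∀ P Q : Finset (ZMod n), IsEquitableArcPartition n P Q →
    |((A ∩ P).card : ℤ) - ((A ∩ Q).card : ℤ)| ≤ 1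

open Finset

namespace CycProof

variable (n : ℕ) [NeZero n]

/-- The "upper half" length. -/
def hh (n : ℕ) : ℕ := (n + 1) / 2

def arcP (j : ZMod n) : Finset (ZMod n) :=
  (Finset.range (hh n)).image (fun i : ℕ => j + (i : ZMod n))

def arcQ (j : ZMod n) : Finset (ZMod n) :=
  (Finset.range (n - hh n)).image (fun i : ℕ => (j + ((hh n : ℕ) : ZMod n)) + (i : ZMod n))

lemma hh_le : hh n ≤ n := by
  have := NeZero.pos n; unfold hh; omega

lemma mem_arcGen (a : ZMod n) (k : ℕ) (hk : k ≤ n) (v : ZMod n) :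
    v ∈ (Finset.range k).image (fun i : ℕ => a + (i : ZMod n)) ↔ (v - a).val < k := by
  simp only [Finset.mem_image, Finset.mem_range]
  constructor
  · rintro ⟨i, hi, rfl⟩
    rw [add_sub_cancel_left, ZMod.val_cast_of_lt (lt_of_lt_of_le hi hk)]
    exact hi
  · intro hv
    exact ⟨(v - a).val, hv, by rw [ZMod.natCast_zmod_val]; ring⟩

lemma mem_arcP (j v : ZMod n) : v ∈ arcP n j ↔ (v - j).val < hh n :=
  mem_arcGen n j (hh n) (hh_le n) v

lemma val_sub' (v j : ZMod n) : (v - j).val = (v.val + (n - j.val)) % n := by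
  have h1 : ((v.val + (n - j.val) : ℕ) : ZMod n) = v - j := by
    push_cast [Nat.cast_sub (le_of_lt (ZMod.val_lt j))]
    rw [ZMod.natCast_zmod_val, ZMod.natCast_zmod_val, ZMod.natCast_self]
    ring
  rw [← h1, ZMod.val_natCast]

lemma arcQ_compl (j : ZMod n) : arcQ n j = (arcP n j)ᶜ := by
  ext v
  rw [Finset.mem_compl, mem_arcP, arcQ, mem_arcGen n _ _ (by omega), sub_add_eq_sub_sub]
  have hv := ZMod.val_lt (v - j)
  have hhle := hh_le n
  have hpos := NeZero.pos n
  rw [val_sub' n (v - j) ((hh n : ℕ) : ZMod n), ZMod.val_natCast]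
  rcases Nat.lt_or_ge n 2 with hn1 | hn2
  · have hn1' : n = 1 := by omega
    subst hn1'
    simp only [hh]
    omega
  · have hhlt : hh n < n := by unfold hh; omega
    rw [Nat.mod_eq_of_lt hhlt]
    set t := (v - j).val with ht
    rcases le_or_gt (hh n) t with h1 | h1
    · have : (t + (n - hh n)) % n = t - hh n := by
        rw [show t + (n - hh n) = (t - hh n) + n by omega, Nat.add_mod_right,
          Nat.mod_eq_of_lt (by omega)]
      rw [this]; omega
    · have : (t + (n - hh n)) % n = t + (n - hh n) := Nat.mod_eq_of_lt (by omega)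
      rw [this]; omega

lemma arc_card (a : ZMod n) (k : ℕ) :
    ((Finset.range k).image (fun i : ℕ => a + (i : ZMod n))).card = min k n := by
  rcases le_or_gt k n with hk | hk
  · rw [Finset.card_image_of_injOn, Finset.card_range, Nat.min_eq_left hk]
    intro i hi i' hi' he
    simp only [Finset.coe_range, Set.mem_Iio] at hi hi'
    have : (i : ZMod n) = (i' : ZMod n) := by
      have := add_left_cancel he
      exact this
    have := congrArg ZMod.val this
    rwa [ZMod.val_cast_of_lt (lt_of_lt_of_le hi hk),
      ZMod.val_cast_of_lt (lt_of_lt_of_le hi' hk)] at this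
  · have : (Finset.range k).image (fun i : ℕ => a + (i : ZMod n)) = Finset.univ := by
      apply Finset.eq_univ_of_forall
      intro v
      simp only [Finset.mem_image, Finset.mem_range]
      exact ⟨(v - a).val, lt_trans (ZMod.val_lt _) hk, by rw [ZMod.natCast_zmod_val]; ring⟩
    rw [this, Finset.card_univ, ZMod.card, Nat.min_eq_right (le_of_lt hk)]

lemma arcP_card (j : ZMod n) : (arcP n j).card = hh n := by
  rw [arcP, arc_card, Nat.min_eq_left (hh_le n)]

lemma arcQ_card (j : ZMod n) : (arcQ n j).card = n - hh n := by
  rw [arcQ_compl, Finset.card_compl, arcP_card, ZMod.card]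

lemma equitable_arc (j : ZMod n) : IsEquitableArcPartition n (arcP n j) (arcQ n j) := by
  refine ⟨?_, ?_, ⟨j, hh n, rfl⟩, ⟨j + ((hh n : ℕ) : ZMod n), n - hh n, rfl⟩, ?_⟩
  · rw [arcQ_compl, Finset.union_compl]
  · rw [arcQ_compl]; exact disjoint_compl_right
  · rw [arcP_card, arcQ_card, abs_le]
    have h1 := hh_le n
    have h2 : n ≤ 2 * hh n := by unfold hh; omega
    have h3 : 2 * hh n ≤ n + 1 := by unfold hh; omega
    constructor <;> [skip; skip] <;> push_cast [Nat.cast_sub h1] <;> omega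


def Ncount (u v : ZMod n) : ℕ :=
  (Finset.univ.filter (fun j : ZMod n => u ∈ arcP n j ∧ v ∈ arcQ n j)).card

lemma Ncount_eq (u v : ZMod n) :
    Ncount n u v = min (hh n) (n - (v - u).val) - (hh n - (v - u).val) := by
  set h := hh n with hhdef
  set k := (v - u).val with hkdef
  have hkn : k < n := ZMod.val_lt _
  have hhn : h ≤ n := hh_le n
  have hh2 : n ≤ 2 * h := by rw [hhdef]; unfold hh; have := NeZero.pos n; omega
  have step1 : Ncount n u v
      = ((Finset.range n).filter (fun x => x < h ∧ h ≤ (k + x) % n)).card := by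
    unfold Ncount
    apply Finset.card_bij (fun j _ => (u - j).val)
    · intro j hj
      simp only [Finset.mem_filter, Finset.mem_univ, true_and] at hj
      obtain ⟨h1, h2⟩ := hj
      rw [mem_arcP] at h1
      rw [arcQ_compl, Finset.mem_compl, mem_arcP] at h2
      simp only [Finset.mem_filter, Finset.mem_range]
      refine ⟨ZMod.val_lt _, h1, ?_⟩
      have : v - j = (v - u) + (u - j) := by ring
      have hval : (v - j).val = (k + (u - j).val) % n := by
        rw [this, ZMod.val_add]
      omega
    · intro j hj j' hj' he
      have : u - j = u - j' := ZMod.val_injective n he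
      have := congrArg (fun w => u - w) this
      simpa using this
    · intro x hx
      simp only [Finset.mem_filter, Finset.mem_range] at hx
      obtain ⟨hxn, hxh, hxm⟩ := hx
      refine ⟨u - (x : ZMod n), ?_, ?_⟩
      · simp only [Finset.mem_filter, Finset.mem_univ, true_and]
        have hv1 : (u - (u - (x : ZMod n))).val = x := by
          rw [show u - (u - (x : ZMod n)) = (x : ZMod n) by ring, ZMod.val_cast_of_lt hxn]
        constructor
        · rw [mem_arcP, hv1]; exact hxh
        · rw [arcQ_compl, Finset.mem_compl, mem_arcP]
          have : v - (u - (x : ZMod n)) = (v - u) + (x : ZMod n) := by ring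
          rw [this, ZMod.val_add, ZMod.val_cast_of_lt hxn, ← hkdef]
          omega
      · rw [show u - (u - (x : ZMod n)) = (x : ZMod n) by ring, ZMod.val_cast_of_lt hxn]
  rw [step1]
  have key : ∀ x, x < n → ((x < h ∧ h ≤ (k + x) % n) ↔ (h - k ≤ x ∧ x < min h (n - k))) := by
    intro x hx
    rcases Nat.lt_or_ge (k + x) n with hlt | hge
    · rw [Nat.mod_eq_of_lt hlt]; omega
    · have h2 : (k + x) % n = k + x - n := by
        rw [Nat.mod_eq_sub_mod hge, Nat.mod_eq_of_lt (by omega)]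
      rw [h2]; omega
  have : (Finset.range n).filter (fun x => x < h ∧ h ≤ (k + x) % n)
      = Finset.Ico (h - k) (min h (n - k)) := by
    ext x
    simp only [Finset.mem_filter, Finset.mem_range, Finset.mem_Ico]
    constructor
    · rintro ⟨hx, hc⟩
      exact (key x hx).1 hc
    · intro hx
      have hxn : x < n := by omega
      exact ⟨hxn, (key x hxn).2 hx⟩
  rw [this, Nat.card_Ico]

lemma val_sub_rev (u v : ZMod n) : (u - v).val = (n - (v - u).val) % n := by
  have h1 : ((n - (v - u).val : ℕ) : ZMod n) = u - v := by
    push_cast [Nat.cast_sub (le_of_lt (ZMod.val_lt (v - u)))]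
    rw [ZMod.natCast_zmod_val, ZMod.natCast_self]
    ring
  rw [← h1, ZMod.val_natCast]

lemma cycleDist_symm (u v : ZMod n) : cycleDist n u v = cycleDist n v u := by
  unfold cycleDist
  rw [val_sub_rev n u v]
  have hk := ZMod.val_lt (v - u)
  rcases Nat.eq_zero_or_pos (v - u).val with h0 | h0
  · rw [h0]; simp [Nat.mod_self]
  · rw [Nat.mod_eq_of_lt (by omega)]; omega

lemma Ncount_add (u v : ZMod n) :
    Ncount n u v + Ncount n v u = 2 * cycleDist n u v := by
  rw [Ncount_eq, Ncount_eq, val_sub_rev n u v]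
  unfold cycleDist
  set h := hh n with hhdef
  set k := (v - u).val with hk
  have hkn : k < n := ZMod.val_lt _
  have hhn : h ≤ n := hh_le n
  have hh2 : n ≤ 2 * h := by rw [hhdef]; unfold hh; have := NeZero.pos n; omega
  have hh3 : 2 * h ≤ n + 1 := by rw [hhdef]; unfold hh; omega
  rcases Nat.eq_zero_or_pos k with h0 | h0
  · rw [h0]
    simp only [Nat.sub_zero, Nat.mod_self]
    omega
  · rw [Nat.mod_eq_of_lt (show n - k < n by omega)]
    omega


lemma Ncount_self (u : ZMod n) : Ncount n u u = 0 := by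
  unfold Ncount
  rw [Finset.card_eq_zero]
  apply Finset.filter_false_of_mem
  intro j _
  rw [arcQ_compl, Finset.mem_compl]
  tauto

lemma S_eq_T (B : Finset (ZMod n)) :
    ∑ j : ZMod n, (B ∩ arcP n j).card * (B ∩ arcQ n j).card
      = ∑ p ∈ B.offDiag, cycleDist n p.1 p.2 := by
  classical
  have step1 : ∀ j : ZMod n, (B ∩ arcP n j).card * (B ∩ arcQ n j).card
      = ∑ u ∈ B, ∑ v ∈ B,
          (if u ∈ arcP n j ∧ v ∈ arcQ n j then 1 else 0) := by
    intro j
    rw [← Finset.filter_mem_eq_inter, ← Finset.filter_mem_eq_inter,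
      Finset.card_filter, Finset.card_filter, Finset.sum_mul_sum]
    apply Finset.sum_congr rfl
    intro u _
    apply Finset.sum_congr rfl
    intro v _
    by_cases h1 : u ∈ arcP n j <;> by_cases h2 : v ∈ arcQ n j <;> simp [h1, h2]
  have step2 : ∑ j : ZMod n, (B ∩ arcP n j).card * (B ∩ arcQ n j).card
      = ∑ u ∈ B, ∑ v ∈ B, Ncount n u v := by
    simp only [step1]
    rw [Finset.sum_comm]
    apply Finset.sum_congr rfl
    intro u _
    rw [Finset.sum_comm]
    apply Finset.sum_congr rfl
    intro v _
    unfold Ncount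
    rw [Finset.card_filter]
  rw [step2]
  have step3 : ∑ u ∈ B, ∑ v ∈ B, Ncount n u v = ∑ p ∈ B ×ˢ B, Ncount n p.1 p.2 :=
    (Finset.sum_product (s := B) (t := B) (f := fun p => Ncount n p.1 p.2)).symm
  rw [step3, ← Finset.diag_union_offDiag B,
    Finset.sum_union (Finset.disjoint_diag_offDiag B)]
  have step4 : ∑ p ∈ B.diag, Ncount n p.1 p.2 = 0 := by
    apply Finset.sum_eq_zero
    intro p hp
    rw [Finset.mem_diag] at hp
    rw [hp.2, Ncount_self]
  rw [step4, zero_add]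
  have swap_eq : ∑ p ∈ B.offDiag, Ncount n p.2 p.1 = ∑ p ∈ B.offDiag, Ncount n p.1 p.2 := by
    apply Finset.sum_nbij' (i := Prod.swap) (j := Prod.swap)
    · intro p hp
      rw [Finset.mem_offDiag] at hp ⊢
      exact ⟨hp.2.1, hp.1, hp.2.2.symm⟩
    · intro p hp
      rw [Finset.mem_offDiag] at hp ⊢
      exact ⟨hp.2.1, hp.1, hp.2.2.symm⟩
    · intro p _; rfl
    · intro p _; rfl
    · intro p _; rfl
  have doubled : 2 * ∑ p ∈ B.offDiag, Ncount n p.1 p.2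
      = 2 * ∑ p ∈ B.offDiag, cycleDist n p.1 p.2 := by
    rw [two_mul]
    nth_rewrite 1 [← swap_eq]
    rw [← Finset.sum_add_distrib, Finset.mul_sum]
    apply Finset.sum_congr rfl
    intro p _
    rw [← Ncount_add]
    omega
  omega

lemma T_even (B : Finset (ZMod n)) :
    Even (∑ p ∈ B.offDiag, cycleDist n p.1 p.2) := by
  classical
  rw [← Finset.sum_filter_add_sum_filter_not B.offDiag (fun p => p.1.val < p.2.val)]
  have swap_eq : ∑ p ∈ B.offDiag.filter (fun p => ¬ p.1.val < p.2.val),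
        cycleDist n p.1 p.2
      = ∑ p ∈ B.offDiag.filter (fun p => p.1.val < p.2.val), cycleDist n p.1 p.2 := by
    apply Finset.sum_nbij' (i := Prod.swap) (j := Prod.swap)
    · intro p hp
      simp only [Finset.mem_filter, Finset.mem_offDiag, Prod.fst_swap, Prod.snd_swap] at hp ⊢
      have hne : p.1.val ≠ p.2.val := fun he => hp.1.2.2 (ZMod.val_injective n he)
      exact ⟨⟨hp.1.2.1, hp.1.1, hp.1.2.2.symm⟩, by omega⟩
    · intro p hp
      simp only [Finset.mem_filter, Finset.mem_offDiag, Prod.fst_swap, Prod.snd_swap] at hp ⊢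
      exact ⟨⟨hp.1.2.1, hp.1.1, hp.1.2.2.symm⟩, by omega⟩
    · intro p _; rfl
    · intro p _; rfl
    · intro p _; exact cycleDist_symm n _ _
  rw [swap_eq]
  exact ⟨_, rfl⟩


lemma prod_le (x y mm : ℕ) (hxy : x + y = mm) : x * y ≤ mm / 2 * (mm - mm / 2) := by
  have h1 : mm / 2 + (mm - mm / 2) = mm := by omega
  have h2 : mm / 2 ≤ mm - mm / 2 := by omega
  have h3 : mm - mm / 2 ≤ mm / 2 + 1 := by omega
  set c := mm / 2 with hc
  set d := mm - mm / 2 with hd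
  zify
  have hxy' : (x : ℤ) + y = c + d := by push_cast; omega
  rcases le_or_gt x c with h | h
  · have hx1 : (x : ℤ) ≤ c := by exact_mod_cast h
    have hx2 : (x : ℤ) ≤ d := by push_cast; omega
    nlinarith [mul_nonneg (sub_nonneg.2 hx1) (sub_nonneg.2 hx2)]
  · have hx1 : (c : ℤ) ≤ x := by push_cast; omega
    have hx2 : (d : ℤ) ≤ x := by push_cast; omega
    nlinarith [mul_nonneg (sub_nonneg.2 hx1) (sub_nonneg.2 hx2)]

lemma prod_eq_of_bounds (x y mm : ℕ) (hxy : x + y = mm)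
    (hb1 : mm / 2 ≤ x) (hb2 : x ≤ mm - mm / 2) :
    x * y = mm / 2 * (mm - mm / 2) := by
  have hcase : x = mm / 2 ∨ x = mm - mm / 2 := by omega
  rcases hcase with h | h
  · have hy : y = mm - mm / 2 := by omega
    rw [h, hy]
  · have hy : y = mm / 2 := by omega
    rw [h, hy, Nat.mul_comm]

lemma bounds_of_prod_eq (x y mm : ℕ) (hxy : x + y = mm)
    (hp : x * y = mm / 2 * (mm - mm / 2)) :
    mm / 2 ≤ x ∧ x ≤ mm - mm / 2 := by
  have h1 : mm / 2 + (mm - mm / 2) = mm := by omega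
  have h3 : mm - mm / 2 ≤ mm / 2 + 1 := by omega
  set c := mm / 2 with hc
  set d := mm - mm / 2 with hd
  have hxy' : (x : ℤ) + y = c + d := by push_cast; omega
  have hp' : (x : ℤ) * y = c * d := by exact_mod_cast hp
  have key : ((c : ℤ) - x) * ((d : ℤ) - x) = 0 := by linear_combination -hp' + (x : ℤ) * hxy'
  rcases mul_eq_zero.1 key with h | h
  · have : (x : ℤ) = c := by omega
    have : x = c := by exact_mod_cast this
    omega
  · have : (x : ℤ) = d := by omega
    have : x = d := by exact_mod_cast this
    omega

lemma inter_card_add (A S : Finset (ZMod n)) :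
    (A ∩ S).card + (A ∩ Sᶜ).card = A.card := by
  classical
  rw [← Finset.card_union_of_disjoint, ← Finset.inter_union_distrib_left,
    Finset.union_compl, Finset.inter_univ]
  exact Finset.disjoint_of_subset_left Finset.inter_subset_right
    (Finset.disjoint_of_subset_right Finset.inter_subset_right disjoint_compl_right)

lemma balanced_of_windows (hn : 2 ≤ n) (A : Finset (ZMod n))
    (hw : ∀ j : ZMod n, |((A ∩ arcP n j).card : ℤ) - ((A ∩ arcQ n j).card : ℤ)| ≤ 1) :
    IsBalanced n A := by
  rintro P Q ⟨hunion, hdisj, ⟨aP, kP, hP⟩, ⟨aQ, kQ, hQ⟩, hsize⟩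
  have hQP : Q = Pᶜ := by
    ext v
    rw [Finset.mem_compl]
    have h1 : v ∈ P ∪ Q := hunion ▸ Finset.mem_univ v
    rw [Finset.mem_union] at h1
    have h2 : v ∈ P → v ∉ Q := fun hv => Finset.disjoint_left.1 hdisj hv
    tauto
  have hcards : P.card + Q.card = n := by
    rw [hQP, Finset.card_compl, ZMod.card]
    have : P.card ≤ n := by
      have := Finset.card_le_card (Finset.subset_univ P)
      rwa [Finset.card_univ, ZMod.card] at this
    omega
  have hhn := hh_le n
  have hh2 : n ≤ 2 * hh n := by unfold hh; omega
  have hh3 : 2 * hh n ≤ n + 1 := by unfold hh; omega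
  have hhlt : hh n < n := by unfold hh; omega
  have hcase : P.card = hh n ∨ P.card = n - hh n := by
    rw [abs_le] at hsize
    omega
  rcases hcase with hPc | hPc
  · have hkP : kP = hh n := by
      have := arc_card n aP kP
      rw [← hP, hPc] at this
      omega
    have hPP : P = arcP n aP := by rw [hP, hkP]; rfl
    have hQQ : Q = arcQ n aP := by rw [hQP, hPP, arcQ_compl]
    rw [hPP, hQQ]
    exact hw aP
  · have hQc : Q.card = hh n := by omega
    have hkQ : kQ = hh n := by
      have := arc_card n aQ kQ
      rw [← hQ, hQc] at this
      omega
    have hQQ : Q = arcP n aQ := by rw [hQ, hkQ]; rfl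
    have hPP : P = arcQ n aQ := by
      rw [show P = Qᶜ by rw [hQP, compl_compl], hQQ, arcQ_compl]
    rw [hPP, hQQ]
    have := hw aQ
    rw [abs_sub_comm] at this
    exact this


lemma filter_card_interval (N lo hi : ℕ) :
    ((Finset.range N).filter (fun s => lo ≤ s ∧ s < hi)).card = min hi N - lo := by
  have h : (Finset.range N).filter (fun s => lo ≤ s ∧ s < hi) = Finset.Ico lo (min hi N) := by
    ext s
    simp only [Finset.mem_filter, Finset.mem_range, Finset.mem_Ico]
    omega
  rw [h, Nat.card_Ico]

def Bset (n m : ℕ) : Finset (ZMod n) :=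
  ((Finset.range (m - m / 2)).image (fun i : ℕ => (i : ZMod n))) ∪
    ((Finset.range (m / 2)).image (fun i : ℕ => ((hh n + i : ℕ) : ZMod n)))

lemma mem_Bset (hmn : m ≤ n) (v : ZMod n) :
    v ∈ Bset n m ↔ (v.val < m - m / 2 ∨ (hh n ≤ v.val ∧ v.val < hh n + m / 2)) := by
  have hhn := hh_le n
  have hh2 : n ≤ 2 * hh n := by unfold hh; omega
  have hh3 : 2 * hh n ≤ n + 1 := by unfold hh; omega
  have ha : m - m / 2 ≤ hh n := by omega
  have hb : hh n + m / 2 ≤ n := by omega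
  simp only [Bset, Finset.mem_union, Finset.mem_image, Finset.mem_range]
  constructor
  · rintro (⟨i, hi, rfl⟩ | ⟨i, hi, rfl⟩)
    · rw [ZMod.val_cast_of_lt (by omega)]
      left; exact hi
    · rw [ZMod.val_cast_of_lt (by omega)]
      right; omega
  · rintro (h1 | h1)
    · exact Or.inl ⟨v.val, h1, ZMod.natCast_zmod_val v⟩
    · refine Or.inr ⟨v.val - hh n, by omega, ?_⟩
      rw [show hh n + (v.val - hh n) = v.val by omega, ZMod.natCast_zmod_val]

lemma card_Bset (hmn : m ≤ n) : (Bset n m).card = m := by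
  have hhn := hh_le n
  have hh2 : n ≤ 2 * hh n := by unfold hh; omega
  have hh3 : 2 * hh n ≤ n + 1 := by unfold hh; omega
  have ha : m - m / 2 ≤ hh n := by omega
  have hb : hh n + m / 2 ≤ n := by omega
  rw [Bset, Finset.card_union_of_disjoint, Finset.card_image_of_injOn,
    Finset.card_image_of_injOn, Finset.card_range, Finset.card_range]
  · omega
  · intro i hi i' hi' he
    simp only [Finset.coe_range, Set.mem_Iio] at hi hi'
    have := congrArg ZMod.val he
    rw [ZMod.val_cast_of_lt (by omega), ZMod.val_cast_of_lt (by omega)] at this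
    omega
  · intro i hi i' hi' he
    simp only [Finset.coe_range, Set.mem_Iio] at hi hi'
    have := congrArg ZMod.val he
    rwa [ZMod.val_cast_of_lt (by omega), ZMod.val_cast_of_lt (by omega)] at this
  · rw [Finset.disjoint_left]
    rintro v hv1 hv2
    simp only [Finset.mem_image, Finset.mem_range] at hv1 hv2
    obtain ⟨i, hi, rfl⟩ := hv1
    obtain ⟨i', hi', he⟩ := hv2
    have := congrArg ZMod.val he
    rw [ZMod.val_cast_of_lt (by omega), ZMod.val_cast_of_lt (by omega)] at this
    omega

lemma Bset_window (hm2 : 2 ≤ m) (hmn : m ≤ n) (hpar : m % 2 = 1 ∨ n % 2 = 0) (j : ZMod n) :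
    m / 2 ≤ (Bset n m ∩ arcP n j).card ∧ (Bset n m ∩ arcP n j).card ≤ m - m / 2 := by
  classical
  set a := m - m / 2 with hadef
  set b := m / 2 with hbdef
  set h := hh n with hdef
  have hh1 : h = (n + 1) / 2 := by rw [hdef]; rfl
  set t := j.val with htdef
  have htn : t < n := ZMod.val_lt j
  have hhn : h ≤ n := hh_le n
  have hwin : ∀ v : ZMod n, v ∈ arcP n j ↔
      ((t ≤ v.val ∧ v.val < t + h) ∨ v.val + n < t + h) := by
    intro v
    rw [mem_arcP, val_sub' n v j, ← htdef, ← hdef]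
    have hvn : v.val < n := ZMod.val_lt v
    rcases le_or_gt t v.val with hts | hts
    · rw [show v.val + (n - t) = (v.val - t) + n by omega, Nat.add_mod_right,
        Nat.mod_eq_of_lt (by omega)]
      omega
    · rw [Nat.mod_eq_of_lt (by omega)]
      omega
  have hmemI : ∀ v : ZMod n, v ∈ Bset n m ∩ arcP n j ↔
      ((v.val < a ∨ (h ≤ v.val ∧ v.val < h + b)) ∧
        ((t ≤ v.val ∧ v.val < t + h) ∨ v.val + n < t + h)) := by
    intro v
    rw [Finset.mem_inter, mem_Bset n hmn, hwin, ← hadef, ← hbdef, ← hdef]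
  have hcard : (Bset n m ∩ arcP n j).card
      = ((Finset.range n).filter (fun s => (s < a ∨ (h ≤ s ∧ s < h + b)) ∧
          ((t ≤ s ∧ s < t + h) ∨ s + n < t + h))).card := by
    apply Finset.card_bij (fun v _ => v.val)
    · intro v hv
      rw [hmemI] at hv
      simp only [Finset.mem_filter, Finset.mem_range]
      exact ⟨ZMod.val_lt v, hv⟩
    · intro v _ v' _ he
      exact ZMod.val_injective n he
    · intro s hs
      simp only [Finset.mem_filter, Finset.mem_range] at hs
      refine ⟨(s : ZMod n), ?_, ZMod.val_cast_of_lt hs.1⟩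
      rw [hmemI, ZMod.val_cast_of_lt hs.1]
      exact hs.2
  set F1 := (Finset.range n).filter (fun s => t ≤ s ∧ s < min a (t + h)) with hF1
  set F2 := (Finset.range n).filter (fun s => 0 ≤ s ∧ s < min a (t + h - n)) with hF2
  set F3 := (Finset.range n).filter (fun s => max h t ≤ s ∧ s < min (h + b) (t + h)) with hF3
  set F4 := (Finset.range n).filter (fun s => h ≤ s ∧ s < min (h + b) (t + h - n)) with hF4
  have hab : a ≤ h := by omega
  have hbb : h + b ≤ n := by omega
  have hsplit : (Finset.range n).filter (fun s => (s < a ∨ (h ≤ s ∧ s < h + b)) ∧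
      ((t ≤ s ∧ s < t + h) ∨ s + n < t + h)) = F1 ∪ F2 ∪ F3 ∪ F4 := by
    rw [hF1, hF2, hF3, hF4]
    ext s
    simp only [Finset.mem_filter, Finset.mem_union, Finset.mem_range]
    omega
  have hd12 : Disjoint F1 F2 := by
    rw [hF1, hF2, Finset.disjoint_left]
    intro s hs1 hs2
    simp only [Finset.mem_filter, Finset.mem_range] at hs1 hs2
    omega
  have hd123 : Disjoint (F1 ∪ F2) F3 := by
    rw [hF1, hF2, hF3, Finset.disjoint_left]
    intro s hs1 hs2
    simp only [Finset.mem_filter, Finset.mem_union, Finset.mem_range] at hs1 hs2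
    omega
  have hd1234 : Disjoint (F1 ∪ F2 ∪ F3) F4 := by
    rw [hF1, hF2, hF3, hF4, Finset.disjoint_left]
    intro s hs1 hs2
    simp only [Finset.mem_filter, Finset.mem_union, Finset.mem_range] at hs1 hs2
    omega
  have hc1 : F1.card = min (min a (t + h)) n - t := filter_card_interval n t _
  have hc2 : F2.card = min (min a (t + h - n)) n - 0 := filter_card_interval n 0 _
  have hc3 : F3.card = min (min (h + b) (t + h)) n - max h t := filter_card_interval n _ _
  have hc4 : F4.card = min (min (h + b) (t + h - n)) n - h := filter_card_interval n h _
  rw [hcard, hsplit, Finset.card_union_of_disjoint hd1234,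
    Finset.card_union_of_disjoint hd123, Finset.card_union_of_disjoint hd12,
    hc1, hc2, hc3, hc4]
  omega

end CycProof

open CycProof in
/-- For `2 ≤ m ≤ n` with `m` odd or `n` even: a set `A` of `m` vertices of `C_n`
maximizes the Wiener index iff `A` is balanced. -/
theorem stmt_16 (n m : ℕ) [NeZero n] (hm : 2 ≤ m) (hmn : m ≤ n)
    (hpar : Odd m ∨ Even n) (A : Finset (ZMod n)) (hcard : A.card = m) :
    (∀ B : Finset (ZMod n), B.card = m → Wcyc n B ≤ Wcyc n A) ↔ IsBalanced n A := by
  have hn2 : 2 ≤ n := le_trans hm hmn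
  have hpar' : m % 2 = 1 ∨ n % 2 = 0 := by
    rcases hpar with h | h
    · obtain ⟨k, hk⟩ := h; left; omega
    · obtain ⟨k, hk⟩ := h; right; omega
  set Mm := m / 2 * (m - m / 2) with hMm
  have hsum : ∀ B : Finset (ZMod n), B.card = m → ∀ j : ZMod n,
      (B ∩ arcP n j).card + (B ∩ arcQ n j).card = m := by
    intro B hB j
    rw [arcQ_compl, inter_card_add, hB]
  have hconst : (∑ _j : ZMod n, Mm) = n * Mm := by
    rw [Finset.sum_const, Finset.card_univ, ZMod.card, smul_eq_mul]
  have hTle : ∀ B : Finset (ZMod n), B.card = m →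
      (∑ p ∈ B.offDiag, cycleDist n p.1 p.2) ≤ n * Mm := by
    intro B hB
    rw [← S_eq_T, ← hconst]
    exact Finset.sum_le_sum (fun j _ => prod_le _ _ m (hsum B hB j))
  have hTbal : ∀ B : Finset (ZMod n), B.card = m →
      (∀ j : ZMod n, m / 2 ≤ (B ∩ arcP n j).card ∧ (B ∩ arcP n j).card ≤ m - m / 2) →
      (∑ p ∈ B.offDiag, cycleDist n p.1 p.2) = n * Mm := by
    intro B hB hw
    rw [← S_eq_T, ← hconst]
    exact Finset.sum_congr rfl (fun j _ =>
      prod_eq_of_bounds _ _ m (hsum B hB j) (hw j).1 (hw j).2)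
  constructor
  · intro hmax
    have hB0 := card_Bset n (m := m) hmn
    have hTB0 : (∑ p ∈ (Bset n m).offDiag, cycleDist n p.1 p.2) = n * Mm :=
      hTbal _ hB0 (fun j => Bset_window n hm hmn hpar' j)
    have hWle := hmax (Bset n m) hB0
    obtain ⟨pA, hpA⟩ := T_even n A
    obtain ⟨pB, hpB⟩ := T_even n (Bset n m)
    have hTAle := hTle A hcard
    have hTA : (∑ p ∈ A.offDiag, cycleDist n p.1 p.2) = n * Mm := by
      simp only [Wcyc] at hWle
      omega
    have hterm : ∀ j : ZMod n, (A ∩ arcP n j).card * (A ∩ arcQ n j).card = Mm := by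
      by_contra hc
      push_neg at hc
      obtain ⟨j0, hj0⟩ := hc
      have hlt : ∑ j : ZMod n, (A ∩ arcP n j).card * (A ∩ arcQ n j).card
          < ∑ _j : ZMod n, Mm :=
        Finset.sum_lt_sum (fun j _ => prod_le _ _ m (hsum A hcard j))
          ⟨j0, Finset.mem_univ j0,
            lt_of_le_of_ne (prod_le _ _ m (hsum A hcard j0)) hj0⟩
      rw [S_eq_T, hconst] at hlt
      omega
    apply balanced_of_windows n hn2
    intro j
    have hb := bounds_of_prod_eq _ _ m (hsum A hcard j) (hterm j)
    have hsj := hsum A hcard j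
    rw [abs_le]
    constructor <;> omega
  · intro hbal B hB
    have hw : ∀ j : ZMod n, m / 2 ≤ (A ∩ arcP n j).card ∧
        (A ∩ arcP n j).card ≤ m - m / 2 := by
      intro j
      have habs := hbal (arcP n j) (arcQ n j) (equitable_arc n j)
      have hsj := hsum A hcard j
      rw [abs_le] at habs
      omega
    have hTA : (∑ p ∈ A.offDiag, cycleDist n p.1 p.2) = n * Mm := hTbal A hcard hw
    have hTB := hTle B hB
    show Wcyc n B ≤ Wcyc n A
    simp only [Wcyc]
    omega
end

section
/- Let n be odd and m even with 2 ≤ m ≤ n. Every maximizer A of the Wiener index W on C_n with |A| = m is not balanced: there exists an equitable 2-partition {P,Q} of ℤ/nℤ into two arcs with sizes differing by at most one such that |A∩P| and |A∩Q| differ by at least 2. -/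
section Aux
variable {n : ℕ} [NeZero n]

lemma valcast (x : ZMod n) : ((x.val : ℕ) : ZMod n) = x := by
  simp [ZMod.natCast_val, ZMod.cast_id]

lemma arc_inj {a : ZMod n} {i j : ℕ} (hi : i < n) (hj : j < n)
    (h : a + (i : ZMod n) = a + (j : ZMod n)) : i = j := by
  have h2 : (i : ZMod n) = (j : ZMod n) := add_left_cancel h
  have := congrArg ZMod.val h2
  rwa [ZMod.val_cast_of_lt hi, ZMod.val_cast_of_lt hj] at this

lemma arc_card (a : ZMod n) {k : ℕ} (hk : k ≤ n) :
    ((Finset.range k).image (fun i : ℕ => a + (i : ZMod n))).card = k := by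
  rw [Finset.card_image_of_injOn, Finset.card_range]
  intro i hi j hj h
  exact arc_inj (lt_of_lt_of_le (Finset.mem_range.mp hi) hk)
    (lt_of_lt_of_le (Finset.mem_range.mp hj) hk) h

lemma mem_arc {a v : ZMod n} {k : ℕ} :
    v ∈ (Finset.range k).image (fun i : ℕ => a + (i : ZMod n)) ↔
      ∃ i < k, v = a + (i : ZMod n) := by
  simp [eq_comm]

end Aux

/-- For `n` odd and `m` even with `2 ≤ m ≤ n`, every maximizer of the Wiener index on
`C_n` with `m` elements is not balanced: some equitable arc 2-partition splits `A` with
counts differing by at least `2`. -/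
theorem stmt_17 (n m : ℕ) [NeZero n] (hm : 2 ≤ m) (hmn : m ≤ n)
    (hn : Odd n) (hev : Even m) (A : Finset (ZMod n)) (hcard : A.card = m)
    (hmax : ∀ B : Finset (ZMod n), B.card = m → Wcyc n B ≤ Wcyc n A) :
    ∃ P Q : Finset (ZMod n), IsEquitableArcPartition n P Q ∧
      2 ≤ |((A ∩ P).card : ℤ) - ((A ∩ Q).card : ℤ)| := by
  by_contra hcon
  push_neg at hcon
  obtain ⟨k, hk⟩ := hn
  have hn3 : 3 ≤ n := by omega
  have hkn : k ≤ n := by omega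
  set P : ZMod n → Finset (ZMod n) :=
    fun a => (Finset.range k).image (fun i : ℕ => a + (i : ZMod n)) with hP
  set Q : ZMod n → Finset (ZMod n) :=
    fun a => (Finset.range (k+1)).image (fun i : ℕ => (a + (k : ZMod n)) + (i : ZMod n)) with hQ
  -- partition facts
  have hunion : ∀ a, P a ∪ Q a = Finset.univ := by
    intro a
    apply Finset.eq_univ_of_forall
    intro v
    rcases lt_or_ge (v - a).val k with h | h
    · apply Finset.mem_union_left
      rw [hP]; rw [mem_arc]
      exact ⟨(v - a).val, h, by rw [valcast]; ring⟩
    · apply Finset.mem_union_right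
      rw [hQ]; rw [mem_arc]
      have hv : (v - a).val < n := ZMod.val_lt _
      refine ⟨(v - a).val - k, by omega, ?_⟩
      have : ((k : ℕ) : ZMod n) + (((v - a).val - k : ℕ) : ZMod n) = (((v - a).val : ℕ) : ZMod n) := by
        rw [← Nat.cast_add]
        congr 1
        omega
      rw [add_assoc, this, valcast]
      ring
  have hdisj : ∀ a, Disjoint (P a) (Q a) := by
    intro a
    rw [Finset.disjoint_left]
    intro v hv1 hv2
    rw [hP, mem_arc] at hv1
    rw [hQ, mem_arc] at hv2
    obtain ⟨i, hi, hvi⟩ := hv1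
    obtain ⟨j, hj, hvj⟩ := hv2
    have hcast : (a + (k : ZMod n)) + (j : ZMod n) = a + (((k + j : ℕ)) : ZMod n) := by
      push_cast; ring
    rw [hvi, hcast] at hvj
    have := arc_inj (by omega) (by omega) hvj
    omega
  have hPcard : ∀ a, (P a).card = k := fun a => arc_card a hkn
  have hQcard : ∀ a, (Q a).card = k + 1 := fun a => arc_card _ (by omega)
  -- counts split m
  have hsplit : ∀ a, (A ∩ P a).card + (A ∩ Q a).card = m := by
    intro a
    rw [← Finset.card_union_of_disjoint
      (Finset.disjoint_of_subset_left (Finset.inter_subset_right)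
        (Finset.disjoint_of_subset_right (Finset.inter_subset_right) (hdisj a))),
      ← Finset.inter_union_distrib_left, hunion, Finset.inter_univ, hcard]
  -- by hcon, each diff ≤ 1, even ⇒ equal
  have heq : ∀ a, 2 * (A ∩ P a).card = m := by
    intro a
    have hpart : IsEquitableArcPartition n (P a) (Q a) := by
      refine ⟨hunion a, hdisj a, ⟨a, k, rfl⟩, ⟨a + (k : ZMod n), k+1, rfl⟩, ?_⟩
      rw [hPcard, hQcard]; push_cast; rw [abs_sub_comm]; simp
    have h1 := hcon (P a) (Q a) hpart
    have h2 := hsplit a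
    obtain ⟨t, ht⟩ := hev
    have := abs_le.mp (by omega : |((A ∩ P a).card : ℤ) - ((A ∩ Q a).card : ℤ)| ≤ 1)
    omega
  -- counting: number of a with v ∈ P a is k
  have hcount : ∀ v : ZMod n, (Finset.univ.filter (fun a : ZMod n => v ∈ P a)).card = k := by
    intro v
    have himg : Finset.univ.filter (fun a : ZMod n => v ∈ P a) =
        (Finset.range k).image (fun i : ℕ => v - (i : ZMod n)) := by
      ext a
      simp only [Finset.mem_filter, Finset.mem_univ, true_and, hP]
      rw [mem_arc]
      simp only [Finset.mem_image, Finset.mem_range]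
      constructor
      · rintro ⟨i, hi, hvi⟩
        exact ⟨i, hi, by rw [hvi]; ring⟩
      · rintro ⟨i, hi, hai⟩
        exact ⟨i, hi, by rw [← hai]; ring⟩
    rw [himg, Finset.card_image_of_injOn, Finset.card_range]
    intro i hi j hj h
    have h2 : (i : ZMod n) = (j : ZMod n) := by
      have h' : v - (i : ZMod n) = v - (j : ZMod n) := h
      exact sub_right_injective h'
    have := congrArg ZMod.val h2
    rwa [ZMod.val_cast_of_lt (lt_of_lt_of_le (Finset.mem_range.mp hi) hkn),
      ZMod.val_cast_of_lt (lt_of_lt_of_le (Finset.mem_range.mp hj) hkn)] at this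
  -- double counting
  have hsum : ∑ a : ZMod n, (A ∩ P a).card = m * k := by
    have h1 : ∀ a : ZMod n, (A ∩ P a).card = ∑ v ∈ A, if v ∈ P a then 1 else 0 := by
      intro a
      rw [← Finset.filter_mem_eq_inter, Finset.card_filter]
    calc ∑ a : ZMod n, (A ∩ P a).card
        = ∑ a : ZMod n, ∑ v ∈ A, if v ∈ P a then 1 else 0 := Finset.sum_congr rfl (fun a _ => h1 a)
      _ = ∑ v ∈ A, ∑ a : ZMod n, if v ∈ P a then 1 else 0 := Finset.sum_comm
      _ = ∑ v ∈ A, (Finset.univ.filter (fun a : ZMod n => v ∈ P a)).card :=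
          Finset.sum_congr rfl (fun v _ => (Finset.card_filter _ _).symm)
      _ = m * k := by simp [hcount, hcard, mul_comm]
  have h2 : ∑ a : ZMod n, 2 * (A ∩ P a).card = n * m := by
    simp only [heq]
    rw [Finset.sum_const, Finset.card_univ, ZMod.card, smul_eq_mul]
  have h3 : ∑ a : ZMod n, 2 * (A ∩ P a).card = 2 * (m * k) := by
    rw [← Finset.mul_sum, hsum]
  have h4 : (2 * k + 1) * m = 2 * (m * k) := by rw [← hk, ← h2, h3]
  nlinarith [h4, hm]
end
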